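/- arXiv:2312.04863 — 4 statements merged into one kernel-verified Lean document; each statement's English description precedes it below -/
import Mathlib

section
/- (Markov chain Pinsker's inequality) Let M and L be transition matrices on 𝒳 with L(x,y) > 0 for all x,y. Then for every α ∈ (0,1), (α/2) · TV²(M,L) ≤ R_α(M‖L); moreover (1/2) · TV²(M,L) ≤ D_KL(M‖L). -/
open Finset

section auxPinsker

lemma pt_rpow {α p q : ℝ} (hα : 0 < α) (hα1 : α < 1) (hp : 0 ≤ p) (hq : 0 ≤ q) :
    p ^ α * q ^ (1 - α) ≤ α * p + (1 - α) * q - α * (1 - α) * (√p - √q) ^ 2 := by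
  have ha2 : (√p) ^ 2 = p := Real.sq_sqrt hp
  have hb2 : (√q) ^ 2 = q := Real.sq_sqrt hq
  have ha : 0 ≤ √p := Real.sqrt_nonneg p
  have hb : 0 ≤ √q := Real.sqrt_nonneg q
  rcases le_or_gt α (1/2) with hle | hgt
  · have key := Real.geom_mean_le_arith_mean2_weighted (w₁ := 2*α) (w₂ := 1-2*α)
      (p₁ := √p * √q) (p₂ := q) (by linarith) (by linarith) (mul_nonneg ha hb) hq (by ring)
    have hid : (√p * √q) ^ (2*α) * q ^ (1-2*α) = p ^ α * q ^ (1 - α) := by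
      rw [Real.mul_rpow ha hb, Real.sqrt_eq_rpow, Real.sqrt_eq_rpow,
        ← Real.rpow_mul hp, ← Real.rpow_mul hq]
      have h1 : (1:ℝ)/2 * (2*α) = α := by ring
      rw [h1, mul_assoc, ← Real.rpow_add' hq (by intro h; nlinarith)]
      have h2 : α + (1 - 2*α) = 1 - α := by ring
      rw [h2]
    rw [hid] at key
    nlinarith [mul_nonneg (mul_pos hα hα).le (sq_nonneg (√p - √q)), key]
  · have key := Real.geom_mean_le_arith_mean2_weighted (w₁ := 2*α-1) (w₂ := 2-2*α)
      (p₁ := p) (p₂ := √p * √q) (by linarith) (by linarith) hp (mul_nonneg ha hb) (by ring)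
    have hid : p ^ (2*α-1) * (√p * √q) ^ (2-2*α) = p ^ α * q ^ (1 - α) := by
      rw [Real.mul_rpow ha hb, Real.sqrt_eq_rpow, Real.sqrt_eq_rpow,
        ← Real.rpow_mul hp, ← Real.rpow_mul hq]
      have h1 : (1:ℝ)/2 * (2-2*α) = 1 - α := by ring
      rw [h1, ← mul_assoc, ← Real.rpow_add' hp (by intro h; nlinarith)]
      have h2 : 2*α - 1 + (1 - α) = α := by ring
      rw [h2]
    rw [hid] at key
    nlinarith [mul_nonneg (mul_pos (by linarith : (0:ℝ) < 1-α) (by linarith : (0:ℝ) < 1-α)).le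
      (sq_nonneg (√p - √q)), key]

lemma pt_kl {p q : ℝ} (hp : 0 < p) (hq : 0 < q) :
    (√p - √q) ^ 2 ≤ p * Real.log (p / q) - p + q := by
  have ha2 : (√p) ^ 2 = p := Real.sq_sqrt hp.le
  have hb2 : (√q) ^ 2 = q := Real.sq_sqrt hq.le
  have hap : 0 < √p := Real.sqrt_pos.2 hp
  have hbp : 0 < √q := Real.sqrt_pos.2 hq
  have hlog : Real.log (√q / √p) ≤ √q / √p - 1 :=
    Real.log_le_sub_one_of_pos (div_pos hbp hap)
  have h2 : Real.log (p / q) = -2 * Real.log (√q / √p) := by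
    rw [Real.log_div hbp.ne' hap.ne', Real.log_div hp.ne' hq.ne',
      Real.log_sqrt hq.le, Real.log_sqrt hp.le]
    ring
  rw [h2]
  have h3 : p * (√q / √p) = √p * √q := by
    field_simp
    nlinarith
  nlinarith [mul_le_mul_of_nonneg_left hlog hp.le]

variable {ι : Type*} [Fintype ι]

lemma tv_sq_le (p q : ι → ℝ) (hp : ∀ i, 0 ≤ p i) (hq : ∀ i, 0 ≤ q i)
    (hp1 : ∑ i, p i = 1) (hq1 : ∑ i, q i = 1) :
    ((1/2) * ∑ i, |p i - q i|) ^ 2 ≤ ∑ i, (√(p i) - √(q i)) ^ 2 := by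
  have key := Finset.sum_mul_sq_le_sq_mul_sq univ
    (fun i => |√(p i) - √(q i)|) (fun i => √(p i) + √(q i))
  have h1 : ∀ i, |√(p i) - √(q i)| * (√(p i) + √(q i)) = |p i - q i| := by
    intro i
    have := Real.sq_sqrt (hp i); have := Real.sq_sqrt (hq i)
    have hs : 0 ≤ √(p i) + √(q i) := by positivity
    rw [← abs_of_nonneg hs, ← abs_mul]
    congr 1
    nlinarith
  have h2 : ∀ i, |√(p i) - √(q i)| ^ 2 = (√(p i) - √(q i)) ^ 2 := fun i => sq_abs _
  simp only [h1, h2] at key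
  have h3 : ∑ i, (√(p i) + √(q i)) ^ 2 ≤ 4 := by
    have hpt : ∀ i, (√(p i) + √(q i)) ^ 2 ≤ 2 * (p i + q i) := by
      intro i
      have := Real.sq_sqrt (hp i); have := Real.sq_sqrt (hq i)
      nlinarith [sq_nonneg (√(p i) - √(q i))]
    calc ∑ i, (√(p i) + √(q i)) ^ 2 ≤ ∑ i, 2 * (p i + q i) :=
          Finset.sum_le_sum fun i _ => hpt i
      _ = 4 := by rw [← Finset.mul_sum, Finset.sum_add_distrib, hp1, hq1]; norm_num
  have hG : 0 ≤ ∑ i, (√(p i) - √(q i)) ^ 2 := Finset.sum_nonneg fun i _ => sq_nonneg _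
  nlinarith [key, h3, hG]

lemma renyi_sum_le (p q : ι → ℝ) {α : ℝ} (hα : 0 < α) (hα1 : α < 1)
    (hp : ∀ i, 0 ≤ p i) (hq : ∀ i, 0 ≤ q i)
    (hp1 : ∑ i, p i = 1) (hq1 : ∑ i, q i = 1) :
    ∑ i, (p i) ^ α * (q i) ^ (1-α) ≤
      1 - α * (1-α) * ∑ i, (√(p i) - √(q i)) ^ 2 := by
  have key : ∑ i, (p i) ^ α * (q i) ^ (1-α) ≤
      ∑ i, (α * p i + (1-α) * q i - α * (1-α) * (√(p i) - √(q i)) ^ 2) :=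
    Finset.sum_le_sum fun i _ => pt_rpow hα hα1 (hp i) (hq i)
  calc ∑ i, (p i) ^ α * (q i) ^ (1-α) ≤ _ := key
    _ = 1 - α * (1-α) * ∑ i, (√(p i) - √(q i)) ^ 2 := by
        rw [Finset.sum_sub_distrib, Finset.sum_add_distrib, ← Finset.mul_sum,
          ← Finset.mul_sum, ← Finset.mul_sum, hp1, hq1]
        ring

lemma kl_sum_ge (p q : ι → ℝ) (hp : ∀ i, 0 ≤ p i) (hq : ∀ i, 0 < q i)
    (hp1 : ∑ i, p i = 1) (hq1 : ∑ i, q i = 1) :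
    ∑ i, (√(p i) - √(q i)) ^ 2 ≤
      ∑ i, (if 0 < p i then p i * Real.log (p i / q i) else 0) := by
  have hre : ∑ i, (if 0 < p i then p i * Real.log (p i / q i) else 0) =
      ∑ i, ((if 0 < p i then p i * Real.log (p i / q i) else 0) - p i + q i) := by
    rw [Finset.sum_add_distrib, Finset.sum_sub_distrib, hp1, hq1]
    ring
  rw [hre]
  refine Finset.sum_le_sum fun i _ => ?_
  by_cases h : 0 < p i
  · rw [if_pos h]; exact pt_kl h (hq i)
  · have h0 : p i = 0 := le_antisymm (not_lt.1 h) (hp i)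
    rw [if_neg h, h0]
    simp [Real.sq_sqrt (hq i).le]

end auxPinsker

/-- A transition matrix on a finite state space `X`: nonnegative entries, rows sum to one. -/
def IsTransMat {X : Type*} [Fintype X] (M : X → X → ℝ) : Prop :=
  (∀ x y, 0 ≤ M x y) ∧ ∀ x, ∑ y, M x y = 1

/-- The π-weighted α-divergence between transition matrices. -/
noncomputable def Dalpha {X : Type*} [Fintype X] (π : X → ℝ) (α : ℝ) (M L : X → X → ℝ) : ℝ :=
  (1 / (α - 1)) * ((∑ x, ∑ y, π x * L x y * (M x y / L x y) ^ α) - 1)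

/-- The π-weighted Rényi divergence between transition matrices. -/
noncomputable def Ralpha {X : Type*} [Fintype X] (π : X → ℝ) (α : ℝ) (M L : X → X → ℝ) : ℝ :=
  (1 / (α - 1)) * Real.log (1 + (α - 1) * Dalpha π α M L)

/-- The π-weighted total variation distance. -/
noncomputable def TVdist {X : Type*} [Fintype X] (π : X → ℝ) (M L : X → X → ℝ) : ℝ :=
  (1 / 2) * ∑ x, ∑ y, π x * |M x y - L x y|

/-- The π-weighted Kullback–Leibler divergence. -/
noncomputable def DKL {X : Type*} [Fintype X] (π : X → ℝ) (M L : X → X → ℝ) : ℝ :=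
  ∑ x, ∑ y, if 0 < M x y then π x * M x y * Real.log (M x y / L x y) else 0

/-- Markov chain Pinsker's inequality. -/
theorem stmt6 {X : Type*} [Fintype X] [Nonempty X]
    (π : X → ℝ) (hπ : ∀ x, 0 < π x) (hπ1 : ∑ x, π x = 1)
    (M L : X → X → ℝ) (hM : IsTransMat M) (hL : IsTransMat L)
    (hLpos : ∀ x y, 0 < L x y) :
    (∀ α ∈ Set.Ioo (0 : ℝ) 1, α / 2 * TVdist π M L ^ 2 ≤ Ralpha π α M L) ∧
    1 / 2 * TVdist π M L ^ 2 ≤ DKL π M L := by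
  set P : X × X → ℝ := fun z => π z.1 * M z.1 z.2 with hPdef
  set Q : X × X → ℝ := fun z => π z.1 * L z.1 z.2 with hQdef
  have hP0 : ∀ z, 0 ≤ P z := fun z => mul_nonneg (hπ z.1).le (hM.1 z.1 z.2)
  have hQ0 : ∀ z, 0 < Q z := fun z => mul_pos (hπ z.1) (hLpos z.1 z.2)
  have hP1 : ∑ z, P z = 1 := by
    rw [Fintype.sum_prod_type]
    simp only [hPdef]
    calc ∑ x, ∑ y, π x * M x y = ∑ x, π x * ∑ y, M x y := by
          refine Finset.sum_congr rfl fun x _ => ?_; rw [Finset.mul_sum]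
      _ = 1 := by simp only [hM.2, mul_one]; exact hπ1
  have hQ1 : ∑ z, Q z = 1 := by
    rw [Fintype.sum_prod_type]
    simp only [hQdef]
    calc ∑ x, ∑ y, π x * L x y = ∑ x, π x * ∑ y, L x y := by
          refine Finset.sum_congr rfl fun x _ => ?_; rw [Finset.mul_sum]
      _ = 1 := by simp only [hL.2, mul_one]; exact hπ1
  -- TV rewriting
  have hTV : TVdist π M L = (1/2) * ∑ z, |P z - Q z| := by
    rw [TVdist, Fintype.sum_prod_type]
    congr 1
    refine Finset.sum_congr rfl fun x _ => Finset.sum_congr rfl fun y _ => ?_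
    simp only [hPdef, hQdef]
    rw [← mul_sub, abs_mul, abs_of_pos (hπ x)]
  set G := ∑ z, (√(P z) - √(Q z)) ^ 2 with hGdef
  have hGnn : 0 ≤ G := Finset.sum_nonneg fun z _ => sq_nonneg _
  have hTVG : TVdist π M L ^ 2 ≤ G := by
    rw [hTV]
    exact tv_sq_le P Q hP0 (fun z => (hQ0 z).le) hP1 hQ1
  constructor
  · rintro α ⟨hα, hα1⟩
    -- identify the Rényi sum
    have hS : 1 + (α - 1) * Dalpha π α M L = ∑ z, (P z) ^ α * (Q z) ^ (1-α) := by
      have hne : α - 1 ≠ 0 := sub_ne_zero.2 (ne_of_lt hα1)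
      have e : ∀ T : ℝ, 1 + (α - 1) * ((1 / (α - 1)) * (T - 1)) = T := by
        intro T; field_simp; ring
      rw [Dalpha, e, Fintype.sum_prod_type]
      have hterm : ∀ x y, π x * L x y * (M x y / L x y) ^ α
          = (π x * M x y) ^ α * (π x * L x y) ^ (1-α) := by
        intro x y
        have hLp := hLpos x y
        have hMp := hM.1 x y
        have hπp := hπ x
        rw [Real.div_rpow hMp hLp.le,
          Real.mul_rpow hπp.le hMp, Real.mul_rpow hπp.le hLp.le]
        have e1 : L x y ^ (1-α) = L x y / L x y ^ α := by
          rw [Real.rpow_sub hLp, Real.rpow_one]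
        have e2 : π x ^ α * π x ^ (1-α) = π x := by
          rw [← Real.rpow_add hπp]; norm_num
        have hLα : L x y ^ α ≠ 0 := (Real.rpow_pos_of_pos hLp α).ne'
        rw [e1]
        field_simp
        linear_combination (-(M x y ^ α)) * e2
      exact Finset.sum_congr rfl fun x _ => Finset.sum_congr rfl fun y _ => hterm x y
    set S := ∑ z, (P z) ^ α * (Q z) ^ (1-α) with hSdef
    have hSpos : 0 < S := by
      obtain ⟨z, hz⟩ : ∃ z, 0 < P z := by
        by_contra h
        push_neg at h
        have : ∑ z, P z ≤ 0 := Finset.sum_nonpos fun z _ => h z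
        rw [hP1] at this; linarith
      refine Finset.sum_pos' (fun w _ => mul_nonneg (Real.rpow_nonneg (hP0 w) _)
        (Real.rpow_nonneg (hQ0 w).le _)) ⟨z, Finset.mem_univ z, ?_⟩
      exact mul_pos (Real.rpow_pos_of_pos hz α) (Real.rpow_pos_of_pos (hQ0 z) _)
    have hlog : Real.log S ≤ S - 1 := Real.log_le_sub_one_of_pos hSpos
    have hSle : S ≤ 1 - α * (1-α) * G :=
      renyi_sum_le P Q hα hα1 hP0 (fun z => (hQ0 z).le) hP1 hQ1
    have hR : Ralpha π α M L = Real.log S / (α - 1) := by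
      rw [Ralpha, hS, one_div, inv_mul_eq_div]
    rw [hR, le_div_iff_of_neg (by linarith : α - 1 < 0)]
    have ht2 : 0 ≤ TVdist π M L ^ 2 := sq_nonneg _
    nlinarith [hlog, hSle, hTVG, hGnn, ht2,
      mul_nonneg (mul_pos hα (by linarith : (0:ℝ) < 1-α)).le (sub_nonneg.2 hTVG),
      mul_nonneg (mul_pos hα (by linarith : (0:ℝ) < 1-α)).le ht2]
  · -- KL part
    have hDKL : DKL π M L = ∑ z, (if 0 < P z then P z * Real.log (P z / Q z) else 0) := by
      rw [DKL, Fintype.sum_prod_type]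
      refine Finset.sum_congr rfl fun x _ => Finset.sum_congr rfl fun y _ => ?_
      simp only [hPdef, hQdef]
      have hcond : (0 < M x y) ↔ (0 < π x * M x y) := by
        constructor
        · exact fun h => mul_pos (hπ x) h
        · intro h
          by_contra hc
          push_neg at hc
          have : π x * M x y ≤ 0 := mul_nonpos_of_nonneg_of_nonpos (hπ x).le hc
          linarith
      have harg : π x * M x y / (π x * L x y) = M x y / L x y :=
        mul_div_mul_left _ _ (hπ x).ne'
      rw [harg]
      by_cases h : 0 < M x y
      · rw [if_pos h, if_pos (hcond.1 h)]
      · rw [if_neg h, if_neg (fun hc => h (hcond.2 hc))]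
    rw [hDKL]
    have := kl_sum_ge P Q hP0 hQ0 hP1 hQ1
    nlinarith [hTVG, hGnn, this]
end

section
/- (Weak triangle inequality) Let α > 1 and let U, V, W be transition matrices on 𝒳 with V(x,y) > 0 and W(x,y) > 0 for all x,y. Then R_α(U‖V) ≤ ((2α−1)/(2α−2)) · R_{2α}(U‖W) + R_{2α−1}(W‖V). -/
open Finset

lemma key_pointwise (p u v w β : ℝ) (hp : 0 < p) (hu : 0 ≤ u) (hv : 0 < v) (hw : 0 < w)
    (hβ : 0 < β) :
    (p * w * (u / w) ^ (2 * β)) * (p * v * (w / v) ^ (2 * β - 1))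
      = (p * v * (u / v) ^ β) ^ 2 := by
  rw [Real.div_rpow hu hw.le, Real.div_rpow hw.le hv.le, Real.div_rpow hu hv.le]
  have hu2 : u ^ (2 * β) = (u ^ β) ^ 2 := by
    rw [← Real.rpow_natCast (u ^ β) 2, ← Real.rpow_mul hu]
    norm_num [mul_comm]
  have hw2 : w ^ (2 * β) = w ^ (2 * β - 1) * w := by
    rw [← Real.rpow_add_one hw.ne' (2 * β - 1)]
    norm_num
  have hv2 : v ^ (2 * β) = v ^ (2 * β - 1) * v := by
    rw [← Real.rpow_add_one hv.ne' (2 * β - 1)]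
    norm_num
  have hwp : (0:ℝ) < w ^ (2 * β) := Real.rpow_pos_of_pos hw _
  have hvp : (0:ℝ) < v ^ (2 * β) := Real.rpow_pos_of_pos hv _
  have hwp1 : (0:ℝ) < w ^ (2 * β - 1) := Real.rpow_pos_of_pos hw _
  have hvp1 : (0:ℝ) < v ^ (2 * β - 1) := Real.rpow_pos_of_pos hv _
  have hv3 : (v ^ β : ℝ) ^ 2 = v ^ (2 * β - 1) * v := by
    rw [← Real.rpow_natCast (v ^ β) 2, ← Real.rpow_mul hv.le, ← Real.rpow_add_one hv.ne']
    congr 1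
    push_cast
    ring
  rw [hu2]
  field_simp
  rw [hv3]
  linear_combination (-((u ^ β) ^ 2 * v ^ (2 * β - 1) * v)) * hw2

lemma sum_pos_aux {X : Type*} [Fintype X] [Nonempty X] (π : X → ℝ) (hπ : ∀ x, 0 < π x)
    (β : ℝ) (M L : X → X → ℝ) (hM : ∀ x y, 0 ≤ M x y) (hM1 : ∀ x, ∑ y, M x y = 1)
    (hL : ∀ x y, 0 < L x y) :
    0 < ∑ x, ∑ y, π x * L x y * (M x y / L x y) ^ β := by
  apply Finset.sum_pos _ univ_nonempty
  intro x _
  have hy : ∃ y, 0 < M x y := by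
    by_contra h
    push_neg at h
    have : ∑ y, M x y = 0 := Finset.sum_eq_zero fun y _ => le_antisymm (h y) (hM x y)
    rw [hM1 x] at this; norm_num at this
  obtain ⟨y, hy⟩ := hy
  apply Finset.sum_pos' (fun z _ => mul_nonneg (mul_nonneg (hπ x).le (hL x z).le)
    (Real.rpow_nonneg (div_nonneg (hM x z) (hL x z).le) β))
  exact ⟨y, Finset.mem_univ y, mul_pos (mul_pos (hπ x) (hL x y))
    (Real.rpow_pos_of_pos (div_pos hy (hL x y)) β)⟩

/-- Weak triangle inequality for the Rényi divergence. -/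
theorem stmt9 {X : Type*} [Fintype X] [Nonempty X]
    (π : X → ℝ) (hπ : ∀ x, 0 < π x) (hπ1 : ∑ x, π x = 1)
    (α : ℝ) (hα : 1 < α)
    (U V W : X → X → ℝ) (hU : IsTransMat U) (hV : IsTransMat V) (hW : IsTransMat W)
    (hVpos : ∀ x y, 0 < V x y) (hWpos : ∀ x y, 0 < W x y) :
    Ralpha π α U V ≤ (2 * α - 1) / (2 * α - 2) * Ralpha π (2 * α) U W
      + Ralpha π (2 * α - 1) W V := by
  have hα1 : α - 1 ≠ 0 := by linarith
  have hα2 : 2 * α - 1 ≠ 0 := by linarith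
  have hα3 : 2 * α - 2 ≠ 0 := by linarith
  set S1 : ℝ := ∑ x, ∑ y, π x * V x y * (U x y / V x y) ^ α with hS1
  set S2 : ℝ := ∑ x, ∑ y, π x * W x y * (U x y / W x y) ^ (2 * α) with hS2
  set S3 : ℝ := ∑ x, ∑ y, π x * V x y * (W x y / V x y) ^ (2 * α - 1) with hS3
  have e1 : Ralpha π α U V = (1 / (α - 1)) * Real.log S1 := by
    unfold Ralpha Dalpha
    congr 2
    field_simp
    ring
  have e2 : Ralpha π (2 * α) U W = (1 / (2 * α - 1)) * Real.log S2 := by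
    unfold Ralpha Dalpha
    congr 2
    field_simp
    ring
  have e3 : Ralpha π (2 * α - 1) W V = (1 / (2 * α - 2)) * Real.log S3 := by
    unfold Ralpha Dalpha
    have : 2 * α - 1 - 1 = 2 * α - 2 := by ring
    rw [this]
    congr 2
    field_simp
    ring
  have hS2pos : 0 < S2 := sum_pos_aux π hπ _ U W hU.1 hU.2 hWpos
  have hS3pos : 0 < S3 := sum_pos_aux π hπ _ W V hW.1 hW.2 hVpos
  -- Cauchy-Schwarz step
  have hCS : S1 ≤ Real.sqrt S2 * Real.sqrt S3 := by
    have h1 : S1 = ∑ p ∈ (univ ×ˢ univ : Finset (X × X)),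
        Real.sqrt (π p.1 * W p.1 p.2 * (U p.1 p.2 / W p.1 p.2) ^ (2 * α)) *
        Real.sqrt (π p.1 * V p.1 p.2 * (W p.1 p.2 / V p.1 p.2) ^ (2 * α - 1)) := by
      rw [hS1, ← Finset.sum_product']
      apply Finset.sum_congr rfl
      intro p _
      have hf : (0:ℝ) ≤ π p.1 * W p.1 p.2 * (U p.1 p.2 / W p.1 p.2) ^ (2 * α) :=
        mul_nonneg (mul_nonneg (hπ p.1).le (hWpos p.1 p.2).le)
          (Real.rpow_nonneg (div_nonneg (hU.1 p.1 p.2) (hWpos p.1 p.2).le) _)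
      rw [← Real.sqrt_mul hf,
        key_pointwise _ _ _ _ _ (hπ p.1) (hU.1 p.1 p.2) (hVpos p.1 p.2) (hWpos p.1 p.2)
          (by linarith)]
      rw [Real.sqrt_sq (mul_nonneg (mul_nonneg (hπ p.1).le (hVpos p.1 p.2).le)
        (Real.rpow_nonneg (div_nonneg (hU.1 p.1 p.2) (hVpos p.1 p.2).le) _))]
    rw [h1, hS2, hS3, ← Finset.sum_product' (f := fun x y => π x * W x y * (U x y / W x y) ^ (2 * α)),
      ← Finset.sum_product' (f := fun x y => π x * V x y * (W x y / V x y) ^ (2 * α - 1))]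
    exact Real.sum_sqrt_mul_sqrt_le _
      (fun p => mul_nonneg (mul_nonneg (hπ p.1).le (hWpos p.1 p.2).le)
        (Real.rpow_nonneg (div_nonneg (hU.1 p.1 p.2) (hWpos p.1 p.2).le) _))
      (fun p => mul_nonneg (mul_nonneg (hπ p.1).le (hVpos p.1 p.2).le)
        (Real.rpow_nonneg (div_nonneg (hW.1 p.1 p.2) (hVpos p.1 p.2).le) _))
  have hS1le : Real.log S1 ≤ (Real.log S2 + Real.log S3) / 2 := by
    have hS1pos : 0 < S1 := sum_pos_aux π hπ _ U V hU.1 hU.2 hVpos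
    calc Real.log S1 ≤ Real.log (Real.sqrt S2 * Real.sqrt S3) :=
          Real.log_le_log hS1pos hCS
      _ = (Real.log S2 + Real.log S3) / 2 := by
          rw [Real.log_mul (by positivity) (by positivity), Real.log_sqrt hS2pos.le,
            Real.log_sqrt hS3pos.le]
          ring
  rw [e1, e2, e3]
  have harith : (2 * α - 1) / (2 * α - 2) * ((1 / (2 * α - 1)) * Real.log S2)
      + (1 / (2 * α - 2)) * Real.log S3
      = (1 / (α - 1)) * ((Real.log S2 + Real.log S3) / 2) := by
    field_simp
  rw [harith]
  apply mul_le_mul_of_nonneg_left hS1le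
  exact le_of_lt (one_div_pos.mpr (by linarith))
end

section
/- Let f : ℝ≥0 → ℝ be convex with f(1) = 0 and let P be a transition matrix on 𝒳. Then the ergodicity coefficient on the space of transition matrices equals the one on the space of probability measures: η^f(P) = η̃^f(P). Moreover, for every α ∈ (0,1) ∪ (1,∞), the Rényi ergodicity coefficients satisfy η^{(R_α)}(P) ≥ η̃^{(R_α)}(P). -/
open Finset Filter
open scoped ENNReal
open scoped Topology

/-- A probability mass function on a finite state space `X`. -/
def IsProb {X : Type*} [Fintype X] (μ : X → ℝ) : Prop :=
  (∀ x, 0 ≤ μ x) ∧ ∑ x, μ x = 1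

/-- `f'(∞) := lim_{x→0⁺} x f(1/x)` in the extended reals. -/
noncomputable def fDerivInfty (f : ℝ → ℝ) : EReal :=
  limUnder (nhdsWithin (0 : ℝ) (Set.Ioi 0)) fun x => ((x * f (1 / x) : ℝ) : EReal)

/-- The extended-real-valued π-weighted f-divergence between transition matrices, with the
conventions `0·f(0/0) := 0` and `0·f(a/0) := a·f'(∞)` for `a > 0`. -/
noncomputable def DfE {X : Type*} [Fintype X] (π : X → ℝ) (f : ℝ → ℝ)
    (M L : X → X → ℝ) : EReal :=
  ∑ x, ∑ y,
    if L x y = 0 then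
      (if M x y = 0 then 0 else ((π x * M x y : ℝ) : EReal) * fDerivInfty f)
    else ((π x * L x y * f (M x y / L x y) : ℝ) : EReal)

/-- The extended-real-valued f-divergence between probability measures, with the same
conventions. -/
noncomputable def DtfE {X : Type*} [Fintype X] (f : ℝ → ℝ) (μ ν : X → ℝ) : EReal :=
  ∑ x,
    if ν x = 0 then (if μ x = 0 then 0 else ((μ x : ℝ) : EReal) * fDerivInfty f)
    else ((ν x * f (μ x / ν x) : ℝ) : EReal)

/-- The inner sum of the extended-real-valued π-weighted α-divergence. -/
noncomputable def DalphaSumE {X : Type*} [Fintype X] (π : X → ℝ) (α : ℝ)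
    (M L : X → X → ℝ) : ℝ≥0∞ :=
  ∑ x, ∑ y,
    if L x y = 0 then (if M x y = 0 then 0 else if 1 < α then ⊤ else 0)
    else ENNReal.ofReal (π x * L x y * (M x y / L x y) ^ α)

/-- The extended-real-valued π-weighted α-divergence. -/
noncomputable def DalphaE {X : Type*} [Fintype X] (π : X → ℝ) (α : ℝ)
    (M L : X → X → ℝ) : EReal :=
  ((1 / (α - 1) : ℝ) : EReal) * ((DalphaSumE π α M L : EReal) - 1)

/-- The extended-real-valued π-weighted Rényi divergence. -/
noncomputable def RalphaE {X : Type*} [Fintype X] (π : X → ℝ) (α : ℝ)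
    (M L : X → X → ℝ) : EReal :=
  if DalphaE π α M L = ⊤ then ⊤
  else (((1 / (α - 1)) * Real.log (1 + (α - 1) * (DalphaE π α M L).toReal) : ℝ) : EReal)

/-- The inner sum of the extended-real-valued α-divergence of probability measures. -/
noncomputable def DtalphaSumE {X : Type*} [Fintype X] (α : ℝ) (μ ν : X → ℝ) : ℝ≥0∞ :=
  ∑ x,
    if ν x = 0 then (if μ x = 0 then 0 else if 1 < α then ⊤ else 0)
    else ENNReal.ofReal (ν x * (μ x / ν x) ^ α)

/-- The extended-real-valued α-divergence of probability measures. -/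
noncomputable def DtalphaE {X : Type*} [Fintype X] (α : ℝ) (μ ν : X → ℝ) : EReal :=
  ((1 / (α - 1) : ℝ) : EReal) * ((DtalphaSumE α μ ν : EReal) - 1)

/-- The extended-real-valued Rényi divergence of probability measures. -/
noncomputable def RtalphaE {X : Type*} [Fintype X] (α : ℝ) (μ ν : X → ℝ) : EReal :=
  if DtalphaE α μ ν = ⊤ then ⊤
  else (((1 / (α - 1)) * Real.log (1 + (α - 1) * (DtalphaE α μ ν).toReal) : ℝ) : EReal)

/-- Right action of a transition matrix on a transition matrix. -/
def matMul {X : Type*} [Fintype X] (M P : X → X → ℝ) : X → X → ℝ :=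
  fun x y => ∑ z, M x z * P z y

/-- Right action of a transition matrix on a probability measure. -/
def vecMul {X : Type*} [Fintype X] (μ : X → ℝ) (P : X → X → ℝ) : X → ℝ :=
  fun y => ∑ x, μ x * P x y

/-- The f-divergence ergodicity coefficient on the space of transition matrices. -/
noncomputable def etaF {X : Type*} [Fintype X] (π : X → ℝ) (f : ℝ → ℝ)
    (P : X → X → ℝ) : EReal :=
  sSup {r : EReal | ∃ M L : X → X → ℝ, IsTransMat M ∧ IsTransMat L ∧ M ≠ L ∧
    0 < DfE π f M L ∧ DfE π f M L ≠ ⊤ ∧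
    r = DfE π f (matMul M P) (matMul L P) * ((((DfE π f M L).toReal)⁻¹ : ℝ) : EReal)}

/-- The f-divergence ergodicity coefficient on the space of probability measures. -/
noncomputable def etaTF {X : Type*} [Fintype X] (f : ℝ → ℝ) (P : X → X → ℝ) : EReal :=
  sSup {r : EReal | ∃ μ ν : X → ℝ, IsProb μ ∧ IsProb ν ∧ μ ≠ ν ∧
    0 < DtfE f μ ν ∧ DtfE f μ ν ≠ ⊤ ∧
    r = DtfE f (vecMul μ P) (vecMul ν P) * ((((DtfE f μ ν).toReal)⁻¹ : ℝ) : EReal)}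

/-- The Rényi ergodicity coefficient on the space of transition matrices. -/
noncomputable def etaR {X : Type*} [Fintype X] (π : X → ℝ) (α : ℝ)
    (P : X → X → ℝ) : EReal :=
  sSup {r : EReal | ∃ M L : X → X → ℝ, IsTransMat M ∧ IsTransMat L ∧ M ≠ L ∧
    0 < RalphaE π α M L ∧ RalphaE π α M L ≠ ⊤ ∧
    r = RalphaE π α (matMul M P) (matMul L P) *
      ((((RalphaE π α M L).toReal)⁻¹ : ℝ) : EReal)}

/-- The Rényi ergodicity coefficient on the space of probability measures. -/
noncomputable def etaTR {X : Type*} [Fintype X] (α : ℝ) (P : X → X → ℝ) : EReal :=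
  sSup {r : EReal | ∃ μ ν : X → ℝ, IsProb μ ∧ IsProb ν ∧ μ ≠ ν ∧
    0 < RtalphaE α μ ν ∧ RtalphaE α μ ν ≠ ⊤ ∧
    r = RtalphaE α (vecMul μ P) (vecMul ν P) *
      ((((RtalphaE α μ ν).toReal)⁻¹ : ℝ) : EReal)}

section Helpers

noncomputable def Sf (f : ℝ → ℝ) : EReal :=
  ⨆ t : {t : ℝ // 1 < t}, ((f t.1 / (t.1 - 1) : ℝ) : EReal)

variable {f : ℝ → ℝ}

lemma slope_mono (hf : ConvexOn ℝ (Set.Ici 0) f) (hf1 : f 1 = 0) {t₁ t₂ : ℝ}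
    (h1 : 1 < t₁) (h2 : t₁ ≤ t₂) : f t₁ / (t₁ - 1) ≤ f t₂ / (t₂ - 1) := by
  have := hf.secant_mono (a := 1) (x := t₁) (y := t₂)
    (by norm_num) (by simp; linarith) (by simp; linarith) (by linarith) (by linarith) h2
  simpa [hf1] using this

lemma H_le_Sf {t : ℝ} (ht : 1 < t) : ((f t / (t - 1) : ℝ) : EReal) ≤ Sf f :=
  le_iSup (fun t : {t : ℝ // 1 < t} => ((f t.1 / (t.1 - 1) : ℝ) : EReal)) ⟨t, ht⟩

lemma Sf_ne_bot : Sf f ≠ ⊥ := by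
  intro h
  have := H_le_Sf (f := f) (t := 2) (by norm_num)
  rw [h] at this
  exact (EReal.coe_ne_bot _) (le_bot_iff.1 this)

lemma slope_le_Sf (hf : ConvexOn ℝ (Set.Ici 0) f) (hf1 : f 1 = 0) {s : ℝ}
    (hs : Sf f = (s : EReal)) {u v : ℝ} (hu : 0 ≤ u) (huv : u < v) :
    f v - f u ≤ (v - u) * s := by
  have hft : ∀ t : ℝ, 1 < t → f t ≤ s * (t - 1) := by
    intro t ht
    have := H_le_Sf (f := f) ht
    rw [hs, EReal.coe_le_coe_iff] at this
    rw [div_le_iff₀ (by linarith)] at this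
    linarith [this]
  -- tendsto of bound
  have htend : Tendsto (fun t : ℝ => s + (s * (u - 1) - f u) / (t - u)) atTop
      (𝓝 (s + 0)) := by
    apply tendsto_const_nhds.add
    exact Tendsto.div_atTop tendsto_const_nhds (tendsto_atTop_add_const_right _ (-u) tendsto_id)
  rw [add_zero] at htend
  have hbound : ∀ᶠ t in atTop, (f v - f u) / (v - u) ≤ s + (s * (u - 1) - f u) / (t - u) := by
    filter_upwards [eventually_gt_atTop (max v 1)] with t ht
    have htv : v < t := lt_of_le_of_lt (le_max_left _ _) ht
    have ht1 : 1 < t := lt_of_le_of_lt (le_max_right _ _) ht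
    have htu : u < t := lt_trans huv htv
    have h1 : (f v - f u) / (v - u) ≤ (f t - f u) / (t - u) :=
      hf.secant_mono (a := u) (x := v) (y := t) (by simpa using hu)
        (by simp; linarith) (by simp; linarith) (by linarith) (by linarith) (le_of_lt htv)
    have h2 : (f t - f u) / (t - u) ≤ (s * (t - 1) - f u) / (t - u) := by
      apply div_le_div_of_nonneg_right _ (by linarith)
      · linarith [hft t ht1]
    have htu' : t - u ≠ 0 := by linarith
    have h3 : (s * (t - 1) - f u) / (t - u) = s + (s * (u - 1) - f u) / (t - u) := by
      field_simp
      ring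
    rw [← h3]
    exact le_trans h1 h2
  have := ge_of_tendsto htend hbound
  rw [div_le_iff₀ (by linarith)] at this
  linarith [this]

lemma ereal_exists_real {x : EReal} (hb : x ≠ ⊥) (ht : x ≠ ⊤) : ∃ s : ℝ, x = (s : EReal) :=
  ⟨x.toReal, (EReal.coe_toReal ht hb).symm⟩

lemma tendsto_Sf (hf : ConvexOn ℝ (Set.Ici 0) f) (hf1 : f 1 = 0) :
    Tendsto (fun x : ℝ => ((x * f (1 / x) : ℝ) : EReal)) (𝓝[>] (0:ℝ)) (𝓝 (Sf f)) := by
  have key : ∀ x : ℝ, 0 < x → x < 1 → x * f (1 / x) = (1 - x) * (f (1/x) / (1/x - 1)) := by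
    intro x hx hx1
    have hx0 : x ≠ 0 := ne_of_gt hx
    have h1x : (1:ℝ) - x ≠ 0 := by linarith
    have h1 : 1/x - 1 = (1-x)/x := by field_simp
    rw [h1, div_div_eq_mul_div]
    field_simp
  by_cases hST : Sf f = ⊤
  · rw [hST, EReal.tendsto_nhds_top_iff_real]
    intro M
    have : ((2*|M|+1 : ℝ) : EReal) < Sf f := by rw [hST]; exact EReal.coe_lt_top _
    rw [Sf, lt_iSup_iff] at this
    obtain ⟨⟨t₁, ht₁⟩, ht⟩ := this
    rw [EReal.coe_lt_coe_iff] at ht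
    set δ := min (1/t₁) (1/2) with hδ
    have hδ0 : 0 < δ := lt_min (by positivity) (by norm_num)
    have : Set.Ioo (0:ℝ) δ ∈ 𝓝[>] (0:ℝ) := Ioo_mem_nhdsGT hδ0
    filter_upwards [this] with x hx
    obtain ⟨hx0, hxδ⟩ := hx
    have hx1 : x < 1 := lt_of_lt_of_le hxδ (le_trans (min_le_right _ _) (by norm_num))
    have hxt : t₁ ≤ 1/x := by
      rw [le_div_iff₀ hx0]
      have := lt_of_lt_of_le hxδ (min_le_left _ _)
      rw [lt_div_iff₀ (by linarith)] at this
      linarith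
    have hmono := slope_mono hf hf1 ht₁ hxt
    have h2 : 2*|M|+1 ≤ f (1/x) / (1/x - 1) := le_trans (le_of_lt ht) hmono
    rw [EReal.coe_lt_coe_iff, key x hx0 hx1]
    have hx2 : x ≤ 1/2 := le_trans (le_of_lt hxδ) (min_le_right _ _)
    have h1x : (1:ℝ)/2 ≤ 1 - x := by linarith
    calc M ≤ |M| := le_abs_self M
    _ < (1/2) * (2*|M|+1) := by nlinarith [abs_nonneg M]
    _ ≤ (1 - x) * (f (1/x) / (1/x - 1)) := by
        apply mul_le_mul h1x h2 (by positivity) (by linarith)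
  · obtain ⟨s, hs⟩ := ereal_exists_real (Sf_ne_bot (f := f)) hST
    rw [hs, EReal.tendsto_coe]
    rw [Metric.tendsto_nhdsWithin_nhds]
    intro ε hε
    have : ((s - ε/4 : ℝ) : EReal) < Sf f := by
      rw [hs, EReal.coe_lt_coe_iff]; linarith
    rw [Sf, lt_iSup_iff] at this
    obtain ⟨⟨t₁, ht₁⟩, ht⟩ := this
    rw [EReal.coe_lt_coe_iff] at ht
    set B := |s| + ε with hB
    have hB0 : 0 < B := by have := abs_nonneg s; linarith
    refine ⟨min (min (1/t₁) (1/2)) (ε/(4*B)), by positivity, ?_⟩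
    intro x hx hxd
    have hx0 : 0 < x := hx
    rw [Real.dist_eq, sub_zero, abs_of_pos hx0] at hxd
    rw [Real.dist_eq]
    have hxδ1 : x < 1/t₁ := lt_of_lt_of_le hxd (le_trans (min_le_left _ _) (min_le_left _ _))
    have hxhalf : x < 1/2 := lt_of_lt_of_le hxd (le_trans (min_le_left _ _) (min_le_right _ _))
    have hxB : x < ε/(4*B) := lt_of_lt_of_le hxd (min_le_right _ _)
    have hx1 : x < 1 := by linarith
    have hxt : t₁ ≤ 1/x := by
      rw [le_div_iff₀ hx0]
      rw [lt_div_iff₀ (by linarith)] at hxδ1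
      linarith
    have hmono := slope_mono hf hf1 ht₁ hxt
    have hlow : s - ε/4 < f (1/x) / (1/x - 1) := lt_of_lt_of_le ht hmono
    have hup : f (1/x) / (1/x - 1) ≤ s := by
      have := H_le_Sf (f := f) (t := 1/x) (by rw [lt_div_iff₀ hx0]; linarith)
      rw [hs, EReal.coe_le_coe_iff] at this
      exact this
    have habs : |f (1/x) / (1/x - 1)| ≤ B := by
      rw [abs_le]
      constructor
      · have := neg_abs_le s; linarith
      · have := le_abs_self s; linarith
    rw [key x hx0 hx1]
    have : (1 - x) * (f (1/x) / (1/x - 1)) - s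
        = (f (1/x) / (1/x - 1) - s) - x * (f (1/x) / (1/x - 1)) := by ring
    rw [this]
    have h1 : |f (1/x) / (1/x - 1) - s| ≤ ε/4 := by
      rw [abs_le]; constructor <;> [linarith; linarith]
    have h2 : |x * (f (1/x) / (1/x - 1))| ≤ ε/4 := by
      rw [abs_mul, abs_of_pos hx0]
      calc x * |f (1/x) / (1/x - 1)| ≤ (ε/(4*B)) * B := by
            apply mul_le_mul (le_of_lt hxB) habs (abs_nonneg _) (by positivity)
      _ = ε/4 := by field_simp
    calc |f (1/x) / (1/x - 1) - s - x * (f (1/x) / (1/x - 1))|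
        ≤ |f (1/x) / (1/x - 1) - s| + |x * (f (1/x) / (1/x - 1))| := abs_sub _ _
    _ ≤ ε/4 + ε/4 := add_le_add h1 h2
    _ < ε := by linarith

lemma fDerivInfty_eq (hf : ConvexOn ℝ (Set.Ici 0) f) (hf1 : f 1 = 0) :
    fDerivInfty f = Sf f :=
  (tendsto_Sf hf hf1).limUnder_eq

end Helpers

section Phi
variable {f : ℝ → ℝ}

/-- perspective function -/
noncomputable def Phi (f : ℝ → ℝ) (a b : ℝ) : EReal :=
  if b = 0 then (if a = 0 then 0 else (a : EReal) * fDerivInfty f)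
  else ((b * f (a / b) : ℝ) : EReal)

lemma fD_ne_bot (hf : ConvexOn ℝ (Set.Ici 0) f) (hf1 : f 1 = 0) : fDerivInfty f ≠ ⊥ := by
  rw [fDerivInfty_eq hf hf1]; exact Sf_ne_bot

lemma coe_mul_ne_bot {c : ℝ} (hc : 0 < c) {x : EReal} (hx : x ≠ ⊥) : (c : EReal) * x ≠ ⊥ := by
  induction x using EReal.rec with
  | bot => exact absurd rfl hx
  | coe y => rw [← EReal.coe_mul]; exact EReal.coe_ne_bot _
  | top => rw [EReal.coe_mul_top_of_pos hc]; exact bot_lt_top.ne'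

lemma Phi_ne_bot (hf : ConvexOn ℝ (Set.Ici 0) f) (hf1 : f 1 = 0) {a b : ℝ} (ha : 0 ≤ a) :
    Phi f a b ≠ ⊥ := by
  unfold Phi
  split_ifs with h1 h2
  · simp
  · exact coe_mul_ne_bot (lt_of_le_of_ne ha (Ne.symm h2)) (fD_ne_bot hf hf1)
  · exact EReal.coe_ne_bot _

lemma sum_ne_bot {ι : Type*} {s : Finset ι} {t : ι → EReal} (h : ∀ i ∈ s, t i ≠ ⊥) :
    ∑ i ∈ s, t i ≠ ⊥ := by
  induction s using Finset.cons_induction with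
  | empty => simp
  | cons j s hj ih =>
    rw [Finset.sum_cons, Ne, EReal.add_eq_bot_iff]
    push_neg
    exact ⟨h j (Finset.mem_cons_self _ _), ih fun i hi => h i (Finset.mem_cons.2 (Or.inr hi))⟩

lemma coe_mul_add {c : ℝ} (hc : 0 ≤ c) {a b : EReal} (ha : a ≠ ⊥) (hb : b ≠ ⊥) :
    (c : EReal) * (a + b) = (c : EReal) * a + (c : EReal) * b := by
  rcases eq_or_lt_of_le hc with rfl | hc
  · simp
  induction a using EReal.rec with
  | bot => exact absurd rfl ha
  | coe x =>
    induction b using EReal.rec with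
    | bot => exact absurd rfl hb
    | coe y => norm_cast; ring
    | top => rw [EReal.coe_add_top, EReal.coe_mul_top_of_pos hc, ← EReal.coe_mul,
        EReal.coe_add_top]
  | top =>
    induction b using EReal.rec with
    | bot => exact absurd rfl hb
    | coe y => rw [EReal.top_add_coe, EReal.coe_mul_top_of_pos hc, ← EReal.coe_mul,
        EReal.top_add_coe]
    | top => rw [EReal.top_add_top, EReal.coe_mul_top_of_pos hc, EReal.top_add_top]

lemma coe_mul_sum {ι : Type*} {s : Finset ι} {t : ι → EReal} {c : ℝ} (hc : 0 ≤ c)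
    (h : ∀ i ∈ s, t i ≠ ⊥) :
    (c : EReal) * ∑ i ∈ s, t i = ∑ i ∈ s, (c : EReal) * t i := by
  induction s using Finset.cons_induction with
  | empty => simp
  | cons j s hj ih =>
    rw [Finset.sum_cons, Finset.sum_cons,
      coe_mul_add hc (h j (Finset.mem_cons_self _ _))
        (sum_ne_bot fun i hi => h i (Finset.mem_cons.2 (Or.inr hi))),
      ih fun i hi => h i (Finset.mem_cons.2 (Or.inr hi))]

lemma add_coe_mul {c d : ℝ} (hc : 0 ≤ c) (hd : 0 ≤ d) {a : EReal} (ha : a ≠ ⊥) :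
    ((c + d : ℝ) : EReal) * a = (c : EReal) * a + (d : EReal) * a := by
  induction a using EReal.rec with
  | bot => exact absurd rfl ha
  | coe x => norm_cast; ring
  | top =>
    rcases eq_or_lt_of_le hc with rfl | hc'
    · simp
    rcases eq_or_lt_of_le hd with rfl | hd'
    · simp
    rw [EReal.coe_mul_top_of_pos (by linarith), EReal.coe_mul_top_of_pos hc',
      EReal.coe_mul_top_of_pos hd', EReal.top_add_top]

lemma sum_coe_mul {ι : Type*} {s : Finset ι} {c : ι → ℝ} (hc : ∀ i ∈ s, 0 ≤ c i)
    {a : EReal} (ha : a ≠ ⊥) :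
    ∑ i ∈ s, ((c i : ℝ) : EReal) * a = ((∑ i ∈ s, c i : ℝ) : EReal) * a := by
  induction s using Finset.cons_induction with
  | empty => simp
  | cons j s hj ih =>
    rw [Finset.sum_cons, Finset.sum_cons,
      add_coe_mul (hc j (Finset.mem_cons_self _ _))
        (Finset.sum_nonneg fun i hi => hc i (Finset.mem_cons.2 (Or.inr hi))) ha,
      ih fun i hi => hc i (Finset.mem_cons.2 (Or.inr hi))]

lemma Phi_homog {c a b : ℝ} (hc : 0 ≤ c) :
    Phi f (c * a) (c * b) = (c : EReal) * Phi f a b := by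
  rcases eq_or_lt_of_le hc with rfl | hc'
  · simp [Phi]
  have hc0 : c ≠ 0 := ne_of_gt hc'
  unfold Phi
  by_cases hb : b = 0
  · subst hb
    rw [mul_zero, if_pos rfl, if_pos rfl]
    by_cases ha : a = 0
    · simp [ha]
    · rw [if_neg (by exact mul_ne_zero hc0 ha), if_neg ha, EReal.coe_mul, mul_assoc]
  · rw [if_neg (mul_ne_zero hc0 hb), if_neg hb, mul_div_mul_left a b hc0, ← EReal.coe_mul,
      mul_assoc]
end Phi

section Subadd
variable {f : ℝ → ℝ}

lemma Phi_subadd_right0 (hf : ConvexOn ℝ (Set.Ici 0) f) (hf1 : f 1 = 0) {a₁ a₂ b₁ : ℝ}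
    (ha1 : 0 ≤ a₁) (ha2 : 0 ≤ a₂) (hb1 : 0 ≤ b₁) :
    Phi f (a₁ + a₂) b₁ ≤ Phi f a₁ b₁ + Phi f a₂ 0 := by
  have hD := fD_ne_bot hf hf1
  by_cases hb : b₁ = 0
  · subst hb
    unfold Phi
    rw [if_pos rfl, if_pos rfl, if_pos rfl]
    by_cases h1 : a₁ = 0
    · subst h1
      simp
    by_cases h2 : a₂ = 0
    · subst h2
      rw [add_zero, if_neg h1, if_pos rfl, add_zero]
    · rw [if_neg (by positivity : a₁ + a₂ ≠ 0), if_neg h1, if_neg h2]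
      rw [show ((a₁ + a₂ : ℝ) : EReal) = ((a₁ + a₂ : ℝ) : EReal) from rfl,
        add_coe_mul ha1 ha2 hD]
  · have hb1p : 0 < b₁ := lt_of_le_of_ne hb1 (Ne.symm hb)
    by_cases h2 : a₂ = 0
    · subst h2
      unfold Phi
      rw [add_zero, if_neg hb]
      simp
    · have ha2p : 0 < a₂ := lt_of_le_of_ne ha2 (Ne.symm h2)
      unfold Phi
      rw [if_neg hb, if_neg hb, if_pos rfl, if_neg h2]
      by_cases hD2 : fDerivInfty f = ⊤
      · rw [hD2, EReal.coe_mul_top_of_pos ha2p, EReal.coe_add_top]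
        exact le_top
      · obtain ⟨s, hs⟩ := ereal_exists_real hD hD2
        rw [hs, ← EReal.coe_mul, ← EReal.coe_add, EReal.coe_le_coe_iff]
        have hSf : Sf f = (s : EReal) := by rw [← fDerivInfty_eq hf hf1]; exact hs
        have hlt : a₁ / b₁ < (a₁ + a₂) / b₁ :=
          (div_lt_div_iff_of_pos_right hb1p).2 (by linarith)
        have hslope := slope_le_Sf hf hf1 hSf (div_nonneg ha1 hb1) hlt
        have hdiff : (a₁ + a₂) / b₁ - a₁ / b₁ = a₂ / b₁ := by
          field_simp
          ring
        rw [hdiff] at hslope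
        have h5 := mul_le_mul_of_nonneg_left hslope (le_of_lt hb1p)
        have heq : b₁ * (a₂ / b₁ * s) = a₂ * s := by
          field_simp
        rw [mul_sub, heq] at h5
        linarith
end Subadd

section Subadd2
variable {f : ℝ → ℝ}

lemma Phi_subadd (hf : ConvexOn ℝ (Set.Ici 0) f) (hf1 : f 1 = 0) {a₁ a₂ b₁ b₂ : ℝ}
    (ha1 : 0 ≤ a₁) (ha2 : 0 ≤ a₂) (hb1 : 0 ≤ b₁) (hb2 : 0 ≤ b₂) :
    Phi f (a₁ + a₂) (b₁ + b₂) ≤ Phi f a₁ b₁ + Phi f a₂ b₂ := by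
  by_cases h2 : b₂ = 0
  · subst h2
    rw [add_zero]
    exact Phi_subadd_right0 hf hf1 ha1 ha2 hb1
  by_cases h1 : b₁ = 0
  · subst h1
    rw [zero_add, add_comm a₁ a₂, add_comm (Phi f a₁ 0)]
    exact Phi_subadd_right0 hf hf1 ha2 ha1 hb2
  · have hb1p : 0 < b₁ := lt_of_le_of_ne hb1 (Ne.symm h1)
    have hb2p : 0 < b₂ := lt_of_le_of_ne hb2 (Ne.symm h2)
    have hbs : 0 < b₁ + b₂ := by linarith
    have hbs0 : b₁ + b₂ ≠ 0 := ne_of_gt hbs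
    unfold Phi
    rw [if_neg hbs0, if_neg h1, if_neg h2, ← EReal.coe_add, EReal.coe_le_coe_iff]
    have hjen := hf.2 (Set.mem_Ici.2 (div_nonneg ha1 hb1)) (Set.mem_Ici.2 (div_nonneg ha2 hb2))
      (show (0:ℝ) ≤ b₁ / (b₁ + b₂) by positivity)
      (show (0:ℝ) ≤ b₂ / (b₁ + b₂) by positivity)
      (show b₁ / (b₁ + b₂) + b₂ / (b₁ + b₂) = 1 by field_simp)
    simp only [smul_eq_mul] at hjen
    have harg : b₁ / (b₁ + b₂) * (a₁ / b₁) + b₂ / (b₁ + b₂) * (a₂ / b₂)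
        = (a₁ + a₂) / (b₁ + b₂) := by
      field_simp
    rw [harg] at hjen
    have h5 := mul_le_mul_of_nonneg_left hjen (le_of_lt hbs)
    have heq : (b₁ + b₂) * (b₁ / (b₁ + b₂) * f (a₁ / b₁) + b₂ / (b₁ + b₂) * f (a₂ / b₂))
        = b₁ * f (a₁ / b₁) + b₂ * f (a₂ / b₂) := by
      field_simp
    rw [heq] at h5
    exact h5

lemma Phi_sum_le (hf : ConvexOn ℝ (Set.Ici 0) f) (hf1 : f 1 = 0) {ι : Type*} (s : Finset ι)
    (a b : ι → ℝ) (ha : ∀ i ∈ s, 0 ≤ a i) (hb : ∀ i ∈ s, 0 ≤ b i) :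
    Phi f (∑ i ∈ s, a i) (∑ i ∈ s, b i) ≤ ∑ i ∈ s, Phi f (a i) (b i) := by
  induction s using Finset.cons_induction with
  | empty => simp [Phi]
  | cons j s hj ih =>
    rw [Finset.sum_cons, Finset.sum_cons, Finset.sum_cons]
    calc Phi f (a j + ∑ i ∈ s, a i) (b j + ∑ i ∈ s, b i)
        ≤ Phi f (a j) (b j) + Phi f (∑ i ∈ s, a i) (∑ i ∈ s, b i) :=
          Phi_subadd hf hf1 (ha j (Finset.mem_cons_self _ _))
            (Finset.sum_nonneg fun i hi => ha i (Finset.mem_cons.2 (Or.inr hi)))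
            (hb j (Finset.mem_cons_self _ _))
            (Finset.sum_nonneg fun i hi => hb i (Finset.mem_cons.2 (Or.inr hi)))
      _ ≤ Phi f (a j) (b j) + ∑ i ∈ s, Phi f (a i) (b i) :=
          add_le_add_right (ih (fun i hi => ha i (Finset.mem_cons.2 (Or.inr hi)))
            (fun i hi => hb i (Finset.mem_cons.2 (Or.inr hi)))) _
end Subadd2

section Dtf
variable {X : Type*} [Fintype X] {f : ℝ → ℝ}

lemma DtfE_eq_sum_Phi (μ ν : X → ℝ) : DtfE f μ ν = ∑ x, Phi f (μ x) (ν x) := rfl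

lemma DtfE_ne_bot (hf : ConvexOn ℝ (Set.Ici 0) f) (hf1 : f 1 = 0) {μ ν : X → ℝ}
    (hμ : ∀ x, 0 ≤ μ x) : DtfE f μ ν ≠ ⊥ := by
  rw [DtfE_eq_sum_Phi]
  exact sum_ne_bot fun i _ => Phi_ne_bot hf hf1 (hμ i)

lemma DtfE_self (hf1 : f 1 = 0) (μ : X → ℝ) : DtfE f μ μ = 0 := by
  rw [DtfE_eq_sum_Phi]
  apply Finset.sum_eq_zero
  intro x _
  unfold Phi
  split_ifs with h1
  · rfl
  · rw [div_self h1, hf1, mul_zero, EReal.coe_zero]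

lemma DtfE_nonneg (hf : ConvexOn ℝ (Set.Ici 0) f) (hf1 : f 1 = 0) {μ ν : X → ℝ}
    (hμ : IsProb μ) (hν : IsProb ν) : 0 ≤ DtfE f μ ν := by
  have h := Phi_sum_le hf hf1 Finset.univ μ ν (fun i _ => hμ.1 i) (fun i _ => hν.1 i)
  rw [hμ.2, hν.2] at h
  rw [DtfE_eq_sum_Phi]
  refine le_trans ?_ h
  unfold Phi
  rw [if_neg one_ne_zero, div_one, hf1, mul_zero, EReal.coe_zero]

lemma DtfE_dpi (hf : ConvexOn ℝ (Set.Ici 0) f) (hf1 : f 1 = 0) {μ ν : X → ℝ}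
    (hμ : ∀ x, 0 ≤ μ x) (hν : ∀ x, 0 ≤ ν x) {P : X → X → ℝ} (hP : IsTransMat P) :
    DtfE f (vecMul μ P) (vecMul ν P) ≤ DtfE f μ ν := by
  rw [DtfE_eq_sum_Phi, DtfE_eq_sum_Phi]
  have step1 : ∀ y : X, Phi f (vecMul μ P y) (vecMul ν P y)
      ≤ ∑ x, Phi f (μ x * P x y) (ν x * P x y) := fun y =>
    Phi_sum_le hf hf1 Finset.univ _ _
      (fun i _ => mul_nonneg (hμ i) (hP.1 i y)) (fun i _ => mul_nonneg (hν i) (hP.1 i y))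
  calc ∑ y, Phi f (vecMul μ P y) (vecMul ν P y)
      ≤ ∑ y, ∑ x, Phi f (μ x * P x y) (ν x * P x y) :=
        Finset.sum_le_sum fun y _ => step1 y
    _ = ∑ x, ∑ y, ((P x y : ℝ) : EReal) * Phi f (μ x) (ν x) := by
        rw [Finset.sum_comm]
        refine Finset.sum_congr rfl fun x _ => Finset.sum_congr rfl fun y _ => ?_
        rw [mul_comm (μ x) (P x y), mul_comm (ν x) (P x y), Phi_homog (hP.1 x y)]
    _ = ∑ x, Phi f (μ x) (ν x) := by
        refine Finset.sum_congr rfl fun x _ => ?_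
        rw [sum_coe_mul (fun y _ => hP.1 x y) (Phi_ne_bot hf hf1 (hμ x)), hP.2 x,
          EReal.coe_one, one_mul]
end Dtf

section Decomp
variable {X : Type*} [Fintype X] {f : ℝ → ℝ} {π : X → ℝ}

lemma DfE_eq_sum (hf : ConvexOn ℝ (Set.Ici 0) f) (hf1 : f 1 = 0) (hπ : ∀ x, 0 < π x)
    {M L : X → X → ℝ} (hM : ∀ x y, 0 ≤ M x y) :
    DfE π f M L = ∑ x, ((π x : ℝ) : EReal) * DtfE f (M x) (L x) := by
  unfold DfE
  refine Finset.sum_congr rfl fun x _ => ?_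
  rw [DtfE_eq_sum_Phi, coe_mul_sum (le_of_lt (hπ x)) (fun y _ => Phi_ne_bot hf hf1 (hM x y))]
  refine Finset.sum_congr rfl fun y _ => ?_
  unfold Phi
  by_cases hL : L x y = 0
  · rw [if_pos hL, if_pos hL]
    by_cases hM0 : M x y = 0
    · rw [if_pos hM0, if_pos hM0, mul_zero]
    · rw [if_neg hM0, if_neg hM0, EReal.coe_mul, mul_assoc]
  · rw [if_neg hL, if_neg hL, ← EReal.coe_mul, mul_assoc]

lemma DfE_const (hf : ConvexOn ℝ (Set.Ici 0) f) (hf1 : f 1 = 0) (hπ : ∀ x, 0 < π x)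
    (hπ1 : ∑ x, π x = 1) {μ ν : X → ℝ} (hμ : ∀ x, 0 ≤ μ x) :
    DfE π f (fun _ => μ) (fun _ => ν) = DtfE f μ ν := by
  rw [DfE_eq_sum hf hf1 hπ (fun _ y => hμ y),
    sum_coe_mul (fun x _ => (hπ x).le) (DtfE_ne_bot hf hf1 hμ), hπ1, EReal.coe_one, one_mul]

lemma vecMul_prob {μ : X → ℝ} {P : X → X → ℝ} (hμ : IsProb μ) (hP : IsTransMat P) :
    IsProb (vecMul μ P) := by
  constructor
  · intro y
    exact Finset.sum_nonneg fun x _ => mul_nonneg (hμ.1 x) (hP.1 x y)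
  · rw [show (∑ y, vecMul μ P y) = ∑ y, ∑ x, μ x * P x y from rfl, Finset.sum_comm]
    calc ∑ x, ∑ y, μ x * P x y = ∑ x, μ x * ∑ y, P x y := by
          refine Finset.sum_congr rfl fun x _ => (Finset.mul_sum _ _ _).symm
      _ = 1 := by
          rw [Finset.sum_congr rfl fun x _ => by rw [hP.2 x, mul_one]]
          exact hμ.2

lemma const_transMat {μ : X → ℝ} (hμ : IsProb μ) : IsTransMat (fun _ : X => μ) :=
  ⟨fun _ y => hμ.1 y, fun _ => hμ.2⟩

lemma ereal_coe_sum {ι : Type*} (s : Finset ι) (c : ι → ℝ) :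
    ((∑ i ∈ s, c i : ℝ) : EReal) = ∑ i ∈ s, ((c i : ℝ) : EReal) := by
  induction s using Finset.cons_induction with
  | empty => simp
  | cons j s hj ih => rw [Finset.sum_cons, Finset.sum_cons, EReal.coe_add, ih]
end Decomp

section Main1
variable {X : Type*} [Fintype X] [Nonempty X] {f : ℝ → ℝ} {π : X → ℝ}

lemma etaTF_le_etaF (hπ : ∀ x, 0 < π x) (hπ1 : ∑ x, π x = 1)
    (hf : ConvexOn ℝ (Set.Ici 0) f) (hf1 : f 1 = 0)
    {P : X → X → ℝ} (hP : IsTransMat P) : etaTF f P ≤ etaF π f P := by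
  apply sSup_le_sSup
  rintro r ⟨μ, ν, hμ, hν, hne, hpos, htop, hr⟩
  refine ⟨fun _ => μ, fun _ => ν, const_transMat hμ, const_transMat hν, ?_, ?_, ?_, ?_⟩
  · intro h
    exact hne (congrFun h (Classical.arbitrary X))
  · rw [DfE_const hf hf1 hπ hπ1 hμ.1]
    exact hpos
  · rw [DfE_const hf hf1 hπ hπ1 hμ.1]
    exact htop
  · rw [DfE_const hf hf1 hπ hπ1 hμ.1,
      show matMul (fun _ => μ) P = (fun _ : X => vecMul μ P) from rfl,
      show matMul (fun _ => ν) P = (fun _ : X => vecMul ν P) from rfl,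
      DfE_const hf hf1 hπ hπ1 (vecMul_prob hμ hP).1]
    exact hr

lemma etaF_le_etaTF (hπ : ∀ x, 0 < π x) (hπ1 : ∑ x, π x = 1)
    (hf : ConvexOn ℝ (Set.Ici 0) f) (hf1 : f 1 = 0)
    {P : X → X → ℝ} (hP : IsTransMat P) : etaF π f P ≤ etaTF f P := by
  apply sSup_le
  rintro r ⟨M, L, hM, hL, hMLne, hpos, htop, rfl⟩
  by_cases hT : etaTF f P = ⊤
  · rw [hT]; exact le_top
  set d : X → EReal := fun x => DtfE f (M x) (L x) with hd_def
  set e : X → EReal := fun x => DtfE f (vecMul (M x) P) (vecMul (L x) P) with he_def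
  have hMrow : ∀ x, IsProb (M x) := fun x => ⟨fun y => hM.1 x y, hM.2 x⟩
  have hLrow : ∀ x, IsProb (L x) := fun x => ⟨fun y => hL.1 x y, hL.2 x⟩
  have hd0 : ∀ x, 0 ≤ d x := fun x => DtfE_nonneg hf hf1 (hMrow x) (hLrow x)
  have he0 : ∀ x, 0 ≤ e x := fun x =>
    DtfE_nonneg hf hf1 (vecMul_prob (hMrow x) hP) (vecMul_prob (hLrow x) hP)
  have hdec : DfE π f M L = ∑ x, ((π x : ℝ) : EReal) * d x :=
    DfE_eq_sum hf hf1 hπ hM.1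
  have hterm0 : ∀ x, (0:EReal) ≤ ((π x : ℝ) : EReal) * d x := fun x =>
    mul_nonneg (by exact_mod_cast (hπ x).le) (hd0 x)
  have hdtop : ∀ x, d x ≠ ⊤ := by
    intro x hx
    have h1 : ((π x : ℝ) : EReal) * d x = ⊤ := by
      rw [hx]; exact EReal.coe_mul_top_of_pos (hπ x)
    have h2 : ((π x : ℝ) : EReal) * d x ≤ ∑ y, ((π y : ℝ) : EReal) * d y :=
      Finset.single_le_sum (fun i _ => hterm0 i) (Finset.mem_univ x)
    rw [h1, top_le_iff] at h2
    exact htop (by rw [hdec, ← h2])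
  have hdbot : ∀ x, d x ≠ ⊥ := fun x =>
    ne_of_gt (lt_of_lt_of_le (by simp : (⊥:EReal) < 0) (hd0 x))
  set dr : X → ℝ := fun x => (d x).toReal with hdr_def
  have hdcoe : ∀ x, d x = ((dr x : ℝ) : EReal) := fun x =>
    (EReal.coe_toReal (hdtop x) (hdbot x)).symm
  have hdr0 : ∀ x, 0 ≤ dr x := by
    intro x
    rw [← EReal.coe_le_coe_iff, ← hdcoe x]
    exact hd0 x
  have hDcoe : DfE π f M L = ((∑ x, π x * dr x : ℝ) : EReal) := by
    rw [hdec, ereal_coe_sum]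
    exact Finset.sum_congr rfl fun x _ => by rw [hdcoe x, ← EReal.coe_mul]
  set Dr : ℝ := ∑ x, π x * dr x with hDr_def
  have hDrpos : 0 < Dr := by
    rw [← EReal.coe_pos, ← hDcoe]
    exact hpos
  have hex : ∃ x, 0 < d x := by
    by_contra h
    push_neg at h
    have hall : ∀ x, d x = 0 := fun x => le_antisymm (h x) (hd0 x)
    have : DfE π f M L = 0 := by
      rw [hdec]
      exact Finset.sum_eq_zero fun x _ => by rw [hall x, mul_zero]
    rw [this] at hpos
    exact lt_irrefl _ hpos
  have hmem : ∀ x, 0 < d x → (e x * (((dr x)⁻¹ : ℝ) : EReal)) ∈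
      {r : EReal | ∃ μ ν : X → ℝ, IsProb μ ∧ IsProb ν ∧ μ ≠ ν ∧
        0 < DtfE f μ ν ∧ DtfE f μ ν ≠ ⊤ ∧
        r = DtfE f (vecMul μ P) (vecMul ν P) * ((((DtfE f μ ν).toReal)⁻¹ : ℝ) : EReal)} := by
    intro x hx
    refine ⟨M x, L x, hMrow x, hLrow x, ?_, hx, hdtop x, rfl⟩
    intro h
    rw [hd_def] at hx
    simp only [h] at hx
    rw [DtfE_self hf1] at hx
    exact lt_irrefl _ hx
  have hTbot : etaTF f P ≠ ⊥ := by
    obtain ⟨x₀, hx₀⟩ := hex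
    have h1 := le_sSup (hmem x₀ hx₀)
    intro h
    rw [etaTF] at h
    rw [h, le_bot_iff] at h1
    have h2 : (0:EReal) ≤ e x₀ * (((dr x₀)⁻¹ : ℝ) : EReal) :=
      mul_nonneg (he0 x₀) (by exact_mod_cast inv_nonneg.2 (hdr0 x₀))
    rw [h1, le_bot_iff] at h2
    exact absurd h2 (by simp)
  obtain ⟨t, ht⟩ := ereal_exists_real hTbot hT
  have key : ∀ x, e x ≤ ((t * dr x : ℝ) : EReal) := by
    intro x
    rcases eq_or_lt_of_le (hd0 x) with hzero | hposx
    · have hdpi : e x ≤ d x := DtfE_dpi hf hf1 (hMrow x).1 (hLrow x).1 hP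
      have he_eq : e x = 0 := le_antisymm (by rw [← hzero] at hdpi; exact hdpi) (he0 x)
      have hdr_eq : dr x = 0 := by
        have : ((dr x : ℝ) : EReal) = ((0:ℝ) : EReal) := by
          rw [← hdcoe x, ← hzero]; rfl
        exact_mod_cast this
      rw [he_eq, hdr_eq, mul_zero]
      exact le_of_eq EReal.coe_zero.symm
    · have hdrpos : 0 < dr x := by
        rcases eq_or_lt_of_le (hdr0 x) with h | h
        · exfalso
          apply ne_of_gt hposx
          rw [hdcoe x, ← h]
          rfl
        · exact h
      have hle := le_sSup (hmem x hposx)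
      rw [etaTF] at ht
      rw [ht] at hle
      have hetop : e x ≠ ⊤ := by
        intro hxe
        rw [hxe, EReal.top_mul_coe_of_pos (inv_pos.2 hdrpos), top_le_iff] at hle
        exact EReal.coe_ne_top t hle
      have hebot : e x ≠ ⊥ := ne_of_gt (lt_of_lt_of_le (by simp : (⊥:EReal) < 0) (he0 x))
      obtain ⟨er, her⟩ := ereal_exists_real hebot hetop
      have her0 : 0 ≤ er := by
        rw [← EReal.coe_le_coe_iff (x := 0), ← her]
        exact he0 x
      rw [her, ← EReal.coe_mul, EReal.coe_le_coe_iff] at hle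
      rw [her, EReal.coe_le_coe_iff]
      rw [← div_eq_mul_inv, div_le_iff₀ hdrpos] at hle
      linarith [hle]
  have hetop : ∀ x, e x ≠ ⊤ := fun x => ne_top_of_le_ne_top (EReal.coe_ne_top _) (key x)
  have hebot : ∀ x, e x ≠ ⊥ := fun x =>
    ne_of_gt (lt_of_lt_of_le (by simp : (⊥:EReal) < 0) (he0 x))
  set er : X → ℝ := fun x => (e x).toReal with her_def
  have hecoe : ∀ x, e x = ((er x : ℝ) : EReal) := fun x =>
    (EReal.coe_toReal (hetop x) (hebot x)).symm
  have hkeyr : ∀ x, er x ≤ t * dr x := by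
    intro x
    rw [← EReal.coe_le_coe_iff, ← hecoe x]
    exact key x
  have hMPnonneg : ∀ x y, 0 ≤ matMul M P x y := fun x y =>
    Finset.sum_nonneg fun z _ => mul_nonneg (hM.1 x z) (hP.1 z y)
  have hEdec : DfE π f (matMul M P) (matMul L P) = ((∑ x, π x * er x : ℝ) : EReal) := by
    rw [DfE_eq_sum hf hf1 hπ hMPnonneg, ereal_coe_sum]
    refine Finset.sum_congr rfl fun x _ => ?_
    rw [EReal.coe_mul]
    congr 1
    exact (show DtfE f (matMul M P x) (matMul L P x) = e x from rfl).trans (hecoe x)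
  rw [ht, hEdec, hDcoe, EReal.toReal_coe, ← EReal.coe_mul, EReal.coe_le_coe_iff]
  rw [← div_eq_mul_inv, div_le_iff₀ hDrpos]
  calc ∑ x, π x * er x ≤ ∑ x, π x * (t * dr x) :=
        Finset.sum_le_sum fun x _ => mul_le_mul_of_nonneg_left (hkeyr x) (hπ x).le
    _ = t * Dr := by
        rw [hDr_def, Finset.mul_sum]
        exact Finset.sum_congr rfl fun x _ => by ring
end Main1

section Part2
variable {X : Type*} [Fintype X] [Nonempty X] {π : X → ℝ} {α : ℝ}

lemma DalphaSumE_const (hπ : ∀ x, 0 < π x) (hπ1 : ∑ x, π x = 1) {μ ν : X → ℝ}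
    (hμ : ∀ x, 0 ≤ μ x) (hν : ∀ x, 0 ≤ ν x) :
    DalphaSumE π α (fun _ => μ) (fun _ => ν) = DtalphaSumE α μ ν := by
  unfold DalphaSumE DtalphaSumE
  rw [Finset.sum_comm]
  refine Finset.sum_congr rfl fun y _ => ?_
  by_cases hνy : ν y = 0
  · by_cases hμy : μ y = 0
    · simp [hνy, hμy]
    · by_cases hα : 1 < α
      · simp only [if_pos hνy, if_neg hμy, if_pos hα]
        exact ENNReal.sum_eq_top.2 ⟨Classical.arbitrary X, Finset.mem_univ _, rfl⟩
      · simp [hνy, hμy, hα]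
  · simp only [if_neg hνy]
    have hc : ∀ x : X, 0 ≤ π x * (ν y * (μ y / ν y) ^ α) := fun x =>
      mul_nonneg (hπ x).le
        (mul_nonneg (hν y) (Real.rpow_nonneg (div_nonneg (hμ y) (hν y)) α))
    calc ∑ x, ENNReal.ofReal (π x * ν y * (μ y / ν y) ^ α)
        = ∑ x, ENNReal.ofReal (π x * (ν y * (μ y / ν y) ^ α)) := by
          refine Finset.sum_congr rfl fun x _ => by rw [mul_assoc]
      _ = ENNReal.ofReal (∑ x, π x * (ν y * (μ y / ν y) ^ α)) :=
          (ENNReal.ofReal_sum_of_nonneg fun x _ => hc x).symm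
      _ = ENNReal.ofReal (ν y * (μ y / ν y) ^ α) := by
          rw [← Finset.sum_mul, hπ1, one_mul]

lemma DalphaE_const (hπ : ∀ x, 0 < π x) (hπ1 : ∑ x, π x = 1) {μ ν : X → ℝ}
    (hμ : ∀ x, 0 ≤ μ x) (hν : ∀ x, 0 ≤ ν x) :
    DalphaE π α (fun _ => μ) (fun _ => ν) = DtalphaE α μ ν := by
  unfold DalphaE DtalphaE
  rw [DalphaSumE_const hπ hπ1 hμ hν]

lemma RalphaE_const (hπ : ∀ x, 0 < π x) (hπ1 : ∑ x, π x = 1) {μ ν : X → ℝ}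
    (hμ : ∀ x, 0 ≤ μ x) (hν : ∀ x, 0 ≤ ν x) :
    RalphaE π α (fun _ => μ) (fun _ => ν) = RtalphaE α μ ν := by
  unfold RalphaE RtalphaE
  rw [DalphaE_const hπ hπ1 hμ hν]

lemma etaTR_le_etaR (hπ : ∀ x, 0 < π x) (hπ1 : ∑ x, π x = 1)
    {P : X → X → ℝ} (hP : IsTransMat P) : etaTR α P ≤ etaR π α P := by
  apply sSup_le_sSup
  rintro r ⟨μ, ν, hμ, hν, hne, hpos, htop, hr⟩
  refine ⟨fun _ => μ, fun _ => ν, const_transMat hμ, const_transMat hν, ?_, ?_, ?_, ?_⟩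
  · intro h
    exact hne (congrFun h (Classical.arbitrary X))
  · rw [RalphaE_const hπ hπ1 hμ.1 hν.1]
    exact hpos
  · rw [RalphaE_const hπ hπ1 hμ.1 hν.1]
    exact htop
  · rw [RalphaE_const hπ hπ1 hμ.1 hν.1,
      show matMul (fun _ => μ) P = (fun _ : X => vecMul μ P) from rfl,
      show matMul (fun _ => ν) P = (fun _ : X => vecMul ν P) from rfl,
      RalphaE_const hπ hπ1 (vecMul_prob hμ hP).1 (vecMul_prob hν hP).1]
    exact hr
end Part2


/-- The ergodicity coefficient of transition matrices agrees with the classical one on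
probability measures, and the Rényi ergodicity coefficients are comparable. -/
theorem stmt12 {X : Type*} [Fintype X] [Nonempty X]
    (π : X → ℝ) (hπ : ∀ x, 0 < π x) (hπ1 : ∑ x, π x = 1)
    (f : ℝ → ℝ) (hf : ConvexOn ℝ (Set.Ici 0) f) (hf1 : f 1 = 0)
    (P : X → X → ℝ) (hP : IsTransMat P) :
    etaF π f P = etaTF f P ∧
    ∀ α ∈ Set.Ioo (0 : ℝ) 1 ∪ Set.Ioi 1, etaTR α P ≤ etaR π α P := by
  constructor
  · exact le_antisymm (etaF_le_etaTF hπ hπ1 hf hf1 hP) (etaTF_le_etaF hπ hπ1 hf hf1 hP)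
  · intro α _
    exact etaTR_le_etaR hπ hπ1 hP
end

section
/- (Chernoff bound for the best achievable Bayesian error) Let P₀ and P₁ be transition matrices on 𝒳 with P₀(x,y) > 0 and P₁(x,y) > 0 for all x,y, with edge measures Q_i(x,y) := π(x)P_i(x,y) on 𝒳 × 𝒳, and let π₀ ∈ (0,1), π₁ := 1 − π₀ be prior probabilities. For n ≥ 1, the best achievable Bayesian error is P_e*(n) := inf over subsets A ⊆ (𝒳×𝒳)^n of { π₀ Q₀^{⊗n}(A) + π₁ Q₁^{⊗n}(Aᶜ) }, where Q_i^{⊗n} is the n-fold product measure. Then lim_{n→∞} −(1/n) ln P_e*(n) = C(P₀,P₁), where the Chernoff information is C(P₀,P₁) := max_{α ∈ [0,1]} ( −ln ∑_{x,y} π(x) P₀(x,y)^α P₁(x,y)^{1−α} ). -/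
open Finset Filter

open scoped Classical in
/-- The n-fold product probability of a set `A ⊆ (X × X)ⁿ` under the finitely supported
probability mass `Q` on `X × X`. -/
noncomputable def prodProb {X : Type*} [Fintype X] (Q : X × X → ℝ) {n : ℕ}
    (A : Set (Fin n → X × X)) : ℝ :=
  ∑ z : Fin n → X × X, if z ∈ A then ∏ i, Q (z i) else 0

lemma sum_prod_pi {Z : Type*} [Fintype Z] (n : ℕ) (F : Fin n → Z → ℝ) :
    ∑ w : Fin n → Z, ∏ i, F i (w i) = ∏ i, ∑ z, F i z := by
  classical
  rw [Finset.prod_univ_sum (fun _ => univ) F, Fintype.piFinset_univ]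

lemma cross_moment {Z : Type*} [Fintype Z] (p ℓ : Z → ℝ)
    (hp1 : ∑ z, p z = 1) (hpl : ∑ z, p z * ℓ z = 0) (n : ℕ) (i j : Fin n) :
    ∑ w : Fin n → Z, (∏ k, p (w k)) * (ℓ (w i) * ℓ (w j)) =
      if i = j then ∑ z, p z * ℓ z ^ 2 else 0 := by
  classical
  have key : ∀ w : Fin n → Z, (∏ k, p (w k)) * (ℓ (w i) * ℓ (w j)) =
      ∏ k, (p (w k) * ((if i = k then ℓ (w k) else 1) * (if j = k then ℓ (w k) else 1))) := by
    intro w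
    rw [Finset.prod_mul_distrib, Finset.prod_mul_distrib]
    simp [Finset.prod_ite_eq]
  simp_rw [key]
  rw [sum_prod_pi n (fun k z => p z * ((if i = k then ℓ z else 1) * if j = k then ℓ z else 1))]
  by_cases h : i = j
  · subst h
    rw [if_pos rfl]
    rw [Finset.prod_eq_single i]
    · simp only [if_pos rfl]
      exact Finset.sum_congr rfl (fun z _ => by simp [sq])
    · intro k _ hk
      have : ¬ (i = k) := fun hh => hk hh.symm
      simp [this, hp1]
    · simp
  · rw [if_neg h]
    apply Finset.prod_eq_zero (mem_univ i)
    have : ¬ (j = i) := fun hh => h hh.symm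
    simp only [if_pos rfl, if_neg this, mul_one]
    exact hpl

lemma min_le_rpow_mul {a b α : ℝ} (ha : 0 < a) (hb : 0 < b) (h0 : 0 ≤ α) (h1 : α ≤ 1) :
    min a b ≤ a ^ α * b ^ (1 - α) := by
  have hm : 0 < min a b := lt_min ha hb
  calc min a b = (min a b) ^ α * (min a b) ^ (1 - α) := by
        rw [← Real.rpow_add hm]; norm_num
    _ ≤ a ^ α * b ^ (1 - α) :=
        mul_le_mul (Real.rpow_le_rpow hm.le (min_le_left a b) h0)
          (Real.rpow_le_rpow hm.le (min_le_right a b) (by linarith))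
          (Real.rpow_nonneg hm.le _) (Real.rpow_nonneg ha.le _)

set_option maxHeartbeats 1000000 in
theorem chernoff_core {Z : Type*} [Fintype Z] [Nonempty Z]
    (q₀ q₁ : Z → ℝ) (h0 : ∀ z, 0 < q₀ z) (h1 : ∀ z, 0 < q₁ z)
    (s0 : ∑ z, q₀ z = 1) (s1 : ∑ z, q₁ z = 1)
    (π₀ : ℝ) (hπ₀ : π₀ ∈ Set.Ioo (0:ℝ) 1)
    (Pe : ℕ → ℝ)
    (hPe : ∀ n : ℕ, 1 ≤ n → Pe n = ∑ w : Fin n → Z,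
      min (π₀ * ∏ i, q₀ (w i)) ((1 - π₀) * ∏ i, q₁ (w i)))
    (C : ℝ)
    (hC : C = sSup {c : ℝ | ∃ α ∈ Set.Icc (0:ℝ) 1,
      c = - Real.log (∑ z, q₀ z ^ α * q₁ z ^ (1 - α))}) :
    Tendsto (fun n : ℕ => -(1 / n : ℝ) * Real.log (Pe n)) atTop (nhds C) := by
  classical
  set ℓ : Z → ℝ := fun z => Real.log (q₀ z) - Real.log (q₁ z) with hℓ
  set ρ : ℝ → ℝ := fun α => ∑ z, q₁ z * Real.exp (α * ℓ z) with hρ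
  have hq01 : ∀ z, q₀ z = q₁ z * Real.exp (ℓ z) := by
    intro z
    rw [hℓ, Real.exp_sub, Real.exp_log (h0 z), Real.exp_log (h1 z),
      mul_comm, div_mul_cancel₀ _ (h1 z).ne']
  have hρ_rpow : ∀ α : ℝ, (∑ z, q₀ z ^ α * q₁ z ^ (1 - α)) = ρ α := by
    intro α
    refine Finset.sum_congr rfl (fun z _ => ?_)
    rw [Real.rpow_def_of_pos (h0 z), Real.rpow_def_of_pos (h1 z), ← Real.exp_add]
    nth_rewrite 2 [show q₁ z = Real.exp (Real.log (q₁ z)) from (Real.exp_log (h1 z)).symm]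
    rw [← Real.exp_add]
    congr 1
    simp only [hℓ]; ring
  have hρ0 : ρ 0 = 1 := by simp [hρ, s1]
  have hρ1 : ρ 1 = 1 := by
    rw [hρ]
    simp only [one_mul]
    rw [← s0]
    exact Finset.sum_congr rfl (fun z _ => (hq01 z).symm)
  have hρpos : ∀ α, 0 < ρ α := by
    intro α
    exact Finset.sum_pos (fun z _ => mul_pos (h1 z) (Real.exp_pos _)) univ_nonempty
  have hρcont : Continuous ρ := by
    apply continuous_finset_sum
    intro z _
    exact continuous_const.mul ((continuous_id.mul continuous_const).rexp)
  have hρderiv : ∀ α : ℝ, HasDerivAt ρ (∑ z, q₁ z * ℓ z * Real.exp (α * ℓ z)) α := by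
    intro α
    have : ∀ z ∈ univ, HasDerivAt (fun β : ℝ => q₁ z * Real.exp (β * ℓ z))
        (q₁ z * ℓ z * Real.exp (α * ℓ z)) α := by
      intro z _
      have h : HasDerivAt (fun β : ℝ => q₁ z * Real.exp (β * ℓ z))
          (q₁ z * (Real.exp (α * ℓ z) * ℓ z)) α :=
        ((hasDerivAt_mul_const (ℓ z)).exp).const_mul (q₁ z)
      convert h using 1
      ring
    have h := HasDerivAt.sum this
    rwa [show (∑ i ∈ univ, fun β : ℝ => q₁ i * Real.exp (β * ℓ i)) = ρ from
      funext fun β => Finset.sum_apply β (univ : Finset Z) (fun z (β : ℝ) => q₁ z * Real.exp (β * ℓ z))] at h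
  obtain ⟨αs, hαIcc, hmin⟩ :=
    isCompact_Icc.exists_isMinOn (⟨0, by norm_num⟩ : (Set.Icc (0:ℝ) 1).Nonempty)
      hρcont.continuousOn
  have hminle : ∀ x ∈ Set.Icc (0:ℝ) 1, ρ αs ≤ ρ x := fun x hx => hmin hx
  have hd0 : ∑ z, q₁ z * ℓ z * Real.exp (αs * ℓ z) = 0 := by
    by_cases hall : ∀ z, ℓ z = 0
    · exact Finset.sum_eq_zero (fun z _ => by rw [hall z]; ring)
    · push_neg at hall
      obtain ⟨z₀, hz₀⟩ := hall
      have hρhalf : ρ (1/2) < 1 := by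
        have hle : ∀ z ∈ univ, q₁ z * Real.exp ((1/2) * ℓ z) ≤ (q₀ z + q₁ z)/2 := by
          intro z _
          have := convexOn_exp.2 (Set.mem_univ (Real.log (q₀ z))) (Set.mem_univ (Real.log (q₁ z)))
            (by norm_num : (0:ℝ) ≤ 1/2) (by norm_num : (0:ℝ) ≤ 1/2) (by norm_num)
          simp only [smul_eq_mul, Real.exp_log (h0 z), Real.exp_log (h1 z)] at this
          calc q₁ z * Real.exp ((1/2) * ℓ z)
              = Real.exp ((1/2) * Real.log (q₀ z) + (1/2) * Real.log (q₁ z)) := by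
                nth_rewrite 1 [show q₁ z = Real.exp (Real.log (q₁ z)) from (Real.exp_log (h1 z)).symm]
                rw [← Real.exp_add]; congr 1; simp only [hℓ]; ring
            _ ≤ 1/2 * q₀ z + 1/2 * q₁ z := this
            _ = (q₀ z + q₁ z)/2 := by ring
        have hlt : ∃ z ∈ univ, q₁ z * Real.exp ((1/2) * ℓ z) < (q₀ z + q₁ z)/2 := by
          refine ⟨z₀, mem_univ _, ?_⟩
          have hne : Real.log (q₀ z₀) ≠ Real.log (q₁ z₀) := by
            intro h; apply hz₀; simp only [hℓ]; rw [h]; ring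
          have := strictConvexOn_exp.2 (Set.mem_univ (Real.log (q₀ z₀)))
            (Set.mem_univ (Real.log (q₁ z₀))) hne
            (by norm_num : (0:ℝ) < 1/2) (by norm_num : (0:ℝ) < 1/2) (by norm_num)
          simp only [smul_eq_mul, Real.exp_log (h0 z₀), Real.exp_log (h1 z₀)] at this
          calc q₁ z₀ * Real.exp ((1/2) * ℓ z₀)
              = Real.exp ((1/2) * Real.log (q₀ z₀) + (1/2) * Real.log (q₁ z₀)) := by
                nth_rewrite 1 [show q₁ z₀ = Real.exp (Real.log (q₁ z₀)) from (Real.exp_log (h1 z₀)).symm]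
                rw [← Real.exp_add]; congr 1; simp only [hℓ]; ring
            _ < 1/2 * q₀ z₀ + 1/2 * q₁ z₀ := this
            _ = (q₀ z₀ + q₁ z₀)/2 := by ring
        calc ρ (1/2) < ∑ z, (q₀ z + q₁ z)/2 := Finset.sum_lt_sum hle hlt
          _ = 1 := by rw [← Finset.sum_div, Finset.sum_add_distrib, s0, s1]; norm_num
      have hIoo : αs ∈ Set.Ioo (0:ℝ) 1 := by
        have hh : ρ αs < 1 := lt_of_le_of_lt (hminle (1/2) (by norm_num)) hρhalf
        constructor
        · exact lt_of_le_of_ne hαIcc.1 (fun h => by rw [← h, hρ0] at hh; exact lt_irrefl 1 hh)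
        · exact lt_of_le_of_ne hαIcc.2 (fun h => by rw [h, hρ1] at hh; exact lt_irrefl 1 hh)
      have hloc : IsLocalMin ρ αs := by
        apply Filter.eventually_of_mem (isOpen_Ioo.mem_nhds hIoo)
        intro x hx
        exact hminle x (Set.Ioo_subset_Icc_self hx)
      exact hloc.hasDerivAt_eq_zero (hρderiv αs)
  set K : ℝ := ρ αs with hKdef
  have hK : 0 < K := hρpos αs
  set p : Z → ℝ := fun z => q₁ z * Real.exp (αs * ℓ z) / K with hp
  have hppos : ∀ z, 0 < p z := fun z => div_pos (mul_pos (h1 z) (Real.exp_pos _)) hK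
  have hp1 : ∑ z, p z = 1 := by
    rw [hp, ← Finset.sum_div]
    exact div_self hK.ne'
  have hpl : ∑ z, p z * ℓ z = 0 := by
    have he : ∀ z ∈ univ, p z * ℓ z = (q₁ z * ℓ z * Real.exp (αs * ℓ z)) / K := by
      intro z _; rw [hp]; ring
    rw [Finset.sum_congr rfl he, ← Finset.sum_div, hd0, zero_div]
  set V : ℝ := ∑ z, p z * ℓ z ^ 2 with hVdef
  have hV0 : 0 ≤ V := Finset.sum_nonneg fun z _ => mul_nonneg (hppos z).le (sq_nonneg _)
  have hp_prod : ∀ (n : ℕ) (w : Fin n → Z),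
      ∏ i, p (w i) = (∏ i, q₁ (w i)) * Real.exp (αs * ∑ i, ℓ (w i)) / K ^ n := by
    intro n w
    rw [hp]
    rw [Finset.prod_div_distrib, Finset.prod_const, Finset.prod_mul_distrib,
      ← Real.exp_sum, ← Finset.mul_sum]
    simp [Finset.card_univ]
  have hppnn : ∀ (n : ℕ) (w : Fin n → Z), 0 ≤ ∏ i, p (w i) :=
    fun n w => Finset.prod_nonneg fun i _ => (hppos _).le
  have hq1w : ∀ (n : ℕ) (w : Fin n → Z),
      ∏ i, q₁ (w i) = K ^ n * (∏ i, p (w i)) * Real.exp (-(αs * ∑ i, ℓ (w i))) := by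
    intro n w
    rw [hp_prod n w, mul_comm (K ^ n), div_mul_cancel₀ _ (pow_pos hK n).ne', mul_assoc,
      ← Real.exp_add, add_neg_cancel, Real.exp_zero, mul_one]
  have hq0w : ∀ (n : ℕ) (w : Fin n → Z),
      ∏ i, q₀ (w i) = K ^ n * (∏ i, p (w i)) * Real.exp ((1 - αs) * ∑ i, ℓ (w i)) := by
    intro n w
    calc ∏ i, q₀ (w i) = (∏ i, q₁ (w i)) * Real.exp (∑ i, ℓ (w i)) := by
          rw [Real.exp_sum, ← Finset.prod_mul_distrib]
          exact Finset.prod_congr rfl (fun i _ => hq01 (w i))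
      _ = K ^ n * (∏ i, p (w i)) *
          (Real.exp (-(αs * ∑ i, ℓ (w i))) * Real.exp (∑ i, ℓ (w i))) := by
          rw [hq1w n w]; ring
      _ = K ^ n * (∏ i, p (w i)) * Real.exp ((1 - αs) * ∑ i, ℓ (w i)) := by
          rw [← Real.exp_add]
          congr 1
          ring
  have hE1 : ∀ n : ℕ, ∑ w : Fin n → Z, ∏ i, p (w i) = 1 := by
    intro n
    rw [sum_prod_pi n (fun _ z => p z)]
    simp [hp1]
  have hES2 : ∀ n : ℕ, ∑ w : Fin n → Z, (∏ i, p (w i)) * (∑ i, ℓ (w i)) ^ 2 = n * V := by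
    intro n
    have expand : ∀ w : Fin n → Z, (∏ i, p (w i)) * (∑ i, ℓ (w i)) ^ 2
        = ∑ i, ∑ j, (∏ k, p (w k)) * (ℓ (w i) * ℓ (w j)) := by
      intro w
      rw [sq, Finset.sum_mul_sum, Finset.mul_sum]
      exact Finset.sum_congr rfl fun i _ => by rw [Finset.mul_sum]
    calc ∑ w : Fin n → Z, (∏ i, p (w i)) * (∑ i, ℓ (w i)) ^ 2
        = ∑ w : Fin n → Z, ∑ i, ∑ j, (∏ k, p (w k)) * (ℓ (w i) * ℓ (w j)) :=
          Finset.sum_congr rfl fun w _ => expand w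
      _ = ∑ i : Fin n, ∑ w : Fin n → Z, ∑ j, (∏ k, p (w k)) * (ℓ (w i) * ℓ (w j)) :=
          Finset.sum_comm
      _ = ∑ i : Fin n, ∑ j : Fin n, ∑ w : Fin n → Z, (∏ k, p (w k)) * (ℓ (w i) * ℓ (w j)) :=
          Finset.sum_congr rfl fun i _ => Finset.sum_comm
      _ = ∑ i : Fin n, ∑ j : Fin n, if i = j then ∑ z, p z * ℓ z ^ 2 else 0 :=
          Finset.sum_congr rfl fun i _ => Finset.sum_congr rfl fun j _ =>
            cross_moment p ℓ hp1 hpl n i j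
      _ = ∑ _i : Fin n, V := Finset.sum_congr rfl fun i _ => by
            rw [Finset.sum_ite_eq]
            simp [hVdef]
      _ = n * V := by simp [Finset.card_univ, mul_comm]
  have hcheb : ∀ δ : ℝ, 0 < δ → ∀ n : ℕ, 1 ≤ n →
      1 - V / (n * δ ^ 2) ≤
        ∑ w ∈ univ.filter (fun w : Fin n → Z => |∑ i, ℓ (w i)| ≤ n * δ), ∏ i, p (w i) := by
    intro δ hδ n hn
    have hnR : (0:ℝ) < n := by exact_mod_cast hn
    have hnd : (0:ℝ) < (n : ℝ) * δ := mul_pos hnR hδ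
    have hsplit := Finset.sum_filter_add_sum_filter_not univ
      (fun w : Fin n → Z => |∑ i, ℓ (w i)| ≤ n * δ) (fun w => ∏ i, p (w i))
    rw [hE1 n] at hsplit
    have htail : ∑ w ∈ univ.filter (fun w : Fin n → Z => ¬ |∑ i, ℓ (w i)| ≤ n * δ),
        ∏ i, p (w i) ≤ V / (n * δ ^ 2) := by
      have step1 : ∀ w ∈ univ.filter (fun w : Fin n → Z => ¬ |∑ i, ℓ (w i)| ≤ n * δ),
          ∏ i, p (w i) ≤ (∏ i, p (w i)) * (∑ i, ℓ (w i)) ^ 2 / ((n:ℝ) * δ) ^ 2 := by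
        intro w hw
        have hw' : (n:ℝ) * δ ≤ |∑ i, ℓ (w i)| := le_of_lt (not_le.mp (Finset.mem_filter.mp hw).2)
        have hsq : ((n:ℝ) * δ) ^ 2 ≤ (∑ i, ℓ (w i)) ^ 2 := by
          rw [← sq_abs (∑ i, ℓ (w i))]
          exact pow_le_pow_left₀ hnd.le hw' 2
        rw [le_div_iff₀ (pow_pos hnd 2)]
        exact mul_le_mul_of_nonneg_left hsq (hppnn n w)
      calc ∑ w ∈ univ.filter (fun w : Fin n → Z => ¬ |∑ i, ℓ (w i)| ≤ n * δ), ∏ i, p (w i)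
          ≤ ∑ w ∈ univ.filter (fun w : Fin n → Z => ¬ |∑ i, ℓ (w i)| ≤ n * δ),
            (∏ i, p (w i)) * (∑ i, ℓ (w i)) ^ 2 / ((n:ℝ) * δ) ^ 2 :=
            Finset.sum_le_sum step1
        _ ≤ ∑ w : Fin n → Z, (∏ i, p (w i)) * (∑ i, ℓ (w i)) ^ 2 / ((n:ℝ) * δ) ^ 2 :=
            Finset.sum_le_sum_of_subset_of_nonneg (Finset.filter_subset _ _)
              (fun w _ _ => div_nonneg (mul_nonneg (hppnn n w) (sq_nonneg _)) (sq_nonneg _))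
        _ = ((n:ℝ) * V) / ((n:ℝ) * δ) ^ 2 := by rw [← Finset.sum_div, hES2]
        _ = V / (n * δ ^ 2) := by
            field_simp
    linarith
  have hπ1 : (0:ℝ) < 1 - π₀ := by have := hπ₀.2; linarith
  set c : ℝ := min π₀ (1 - π₀) with hcdef
  have hc : 0 < c := lt_min hπ₀.1 hπ1
  have hPepos : ∀ n : ℕ, 1 ≤ n → 0 < Pe n := by
    intro n hn
    rw [hPe n hn]
    exact Finset.sum_pos (fun w _ => lt_min
      (mul_pos hπ₀.1 (Finset.prod_pos fun i _ => h0 _))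
      (mul_pos hπ1 (Finset.prod_pos fun i _ => h1 _))) univ_nonempty
  have hupper : ∀ n : ℕ, 1 ≤ n → Pe n ≤ K ^ n := by
    intro n hn
    rw [hPe n hn]
    have point : ∀ w : Fin n → Z, w ∈ univ →
        min (π₀ * ∏ i, q₀ (w i)) ((1 - π₀) * ∏ i, q₁ (w i)) ≤
          ∏ i, (q₀ (w i) ^ αs * q₁ (w i) ^ (1 - αs)) := by
      intro w _
      have hA : 0 < ∏ i, q₀ (w i) := Finset.prod_pos fun i _ => h0 _
      have hB : 0 < ∏ i, q₁ (w i) := Finset.prod_pos fun i _ => h1 _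
      refine (min_le_rpow_mul (mul_pos hπ₀.1 hA) (mul_pos hπ1 hB) hαIcc.1 hαIcc.2).trans ?_
      rw [Real.mul_rpow hπ₀.1.le hA.le, Real.mul_rpow hπ1.le hB.le,
        ← Real.finset_prod_rpow univ _ (fun i _ => (h0 (w i)).le) αs,
        ← Real.finset_prod_rpow univ _ (fun i _ => (h1 (w i)).le) (1 - αs)]
      calc (π₀ ^ αs * ∏ i, q₀ (w i) ^ αs) * ((1 - π₀) ^ (1 - αs) * ∏ i, q₁ (w i) ^ (1 - αs))
          = (π₀ ^ αs * (1 - π₀) ^ (1 - αs)) * ∏ i, (q₀ (w i) ^ αs * q₁ (w i) ^ (1 - αs)) := by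
            rw [Finset.prod_mul_distrib]; ring
        _ ≤ 1 * ∏ i, (q₀ (w i) ^ αs * q₁ (w i) ^ (1 - αs)) := by
            apply mul_le_mul_of_nonneg_right
            · exact mul_le_one₀ (Real.rpow_le_one hπ₀.1.le hπ₀.2.le hαIcc.1)
                (Real.rpow_nonneg hπ1.le _)
                (Real.rpow_le_one hπ1.le (by linarith [hπ₀.1]) (by linarith [hαIcc.2]))
            · exact Finset.prod_nonneg fun i _ =>
                mul_nonneg (Real.rpow_nonneg (h0 _).le _) (Real.rpow_nonneg (h1 _).le _)
        _ = ∏ i, (q₀ (w i) ^ αs * q₁ (w i) ^ (1 - αs)) := one_mul _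
    calc ∑ w : Fin n → Z, min (π₀ * ∏ i, q₀ (w i)) ((1 - π₀) * ∏ i, q₁ (w i))
        ≤ ∑ w : Fin n → Z, ∏ i, (q₀ (w i) ^ αs * q₁ (w i) ^ (1 - αs)) :=
          Finset.sum_le_sum point
      _ = (∑ z, q₀ z ^ αs * q₁ z ^ (1 - αs)) ^ n := by
          rw [sum_prod_pi n (fun _ z => q₀ z ^ αs * q₁ z ^ (1 - αs))]
          simp [Finset.card_univ]
      _ = K ^ n := by rw [hρ_rpow]
  have hlow : ∀ δ : ℝ, 0 < δ → ∀ n : ℕ, 1 ≤ n →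
      c * (1 - V / (n * δ ^ 2)) * (K ^ n * Real.exp (-((n:ℝ) * δ))) ≤ Pe n := by
    intro δ hδ n hn
    rw [hPe n hn]
    have hKn : (0:ℝ) < K ^ n := pow_pos hK n
    have hXpos : (0:ℝ) < K ^ n * Real.exp (-((n:ℝ) * δ)) := mul_pos hKn (Real.exp_pos _)
    have point : ∀ w ∈ univ.filter (fun w : Fin n → Z => |∑ i, ℓ (w i)| ≤ n * δ),
        c * (K ^ n * Real.exp (-((n:ℝ) * δ))) * ∏ i, p (w i) ≤
          min (π₀ * ∏ i, q₀ (w i)) ((1 - π₀) * ∏ i, q₁ (w i)) := by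
      intro w hw
      have hS : |∑ i, ℓ (w i)| ≤ (n:ℝ) * δ := (Finset.mem_filter.mp hw).2
      have habs1 : |1 - αs| ≤ 1 := abs_le.mpr ⟨by linarith [hαIcc.2], by linarith [hαIcc.1]⟩
      have habs2 : |αs| ≤ 1 := abs_le.mpr ⟨by linarith [hαIcc.1], hαIcc.2⟩
      have hSnn : (0:ℝ) ≤ (n:ℝ) * δ := le_trans (abs_nonneg _) hS
      have h1exp : Real.exp (-((n:ℝ) * δ)) ≤ Real.exp ((1 - αs) * ∑ i, ℓ (w i)) := by
        apply Real.exp_le_exp.mpr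
        have habs : |(1 - αs) * ∑ i, ℓ (w i)| ≤ (n:ℝ) * δ := by
          rw [abs_mul]
          calc |1 - αs| * |∑ i, ℓ (w i)| ≤ 1 * ((n:ℝ) * δ) :=
                mul_le_mul habs1 hS (abs_nonneg _) zero_le_one
            _ = (n:ℝ) * δ := one_mul _
        linarith [neg_abs_le ((1 - αs) * ∑ i, ℓ (w i))]
      have h2exp : Real.exp (-((n:ℝ) * δ)) ≤ Real.exp (-(αs * ∑ i, ℓ (w i))) := by
        apply Real.exp_le_exp.mpr
        have habs : |αs * ∑ i, ℓ (w i)| ≤ (n:ℝ) * δ := by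
          rw [abs_mul]
          calc |αs| * |∑ i, ℓ (w i)| ≤ 1 * ((n:ℝ) * δ) :=
                mul_le_mul habs2 hS (abs_nonneg _) zero_le_one
            _ = (n:ℝ) * δ := one_mul _
        have := neg_abs_le (αs * ∑ i, ℓ (w i))
        have h2 := abs_neg (αs * ∑ i, ℓ (w i))
        linarith [neg_abs_le (-(αs * ∑ i, ℓ (w i))), abs_neg (αs * ∑ i, ℓ (w i))]
      have hKp : (0:ℝ) ≤ K ^ n * ∏ i, p (w i) := mul_nonneg hKn.le (hppnn n w)
      apply le_min
      · calc c * (K ^ n * Real.exp (-((n:ℝ) * δ))) * ∏ i, p (w i)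
            = c * ((K ^ n * ∏ i, p (w i)) * Real.exp (-((n:ℝ) * δ))) := by ring
          _ ≤ π₀ * ((K ^ n * ∏ i, p (w i)) * Real.exp ((1 - αs) * ∑ i, ℓ (w i))) := by
              exact mul_le_mul (min_le_left _ _)
                (mul_le_mul_of_nonneg_left h1exp hKp)
                (mul_nonneg hKp (Real.exp_pos _).le) hπ₀.1.le
          _ = π₀ * ∏ i, q₀ (w i) := by rw [hq0w n w]
      · calc c * (K ^ n * Real.exp (-((n:ℝ) * δ))) * ∏ i, p (w i)
            = c * ((K ^ n * ∏ i, p (w i)) * Real.exp (-((n:ℝ) * δ))) := by ring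
          _ ≤ (1 - π₀) * ((K ^ n * ∏ i, p (w i)) * Real.exp (-(αs * ∑ i, ℓ (w i)))) := by
              exact mul_le_mul (min_le_right _ _)
                (mul_le_mul_of_nonneg_left h2exp hKp)
                (mul_nonneg hKp (Real.exp_pos _).le) hπ1.le
          _ = (1 - π₀) * ∏ i, q₁ (w i) := by rw [hq1w n w]
    calc c * (1 - V / (n * δ ^ 2)) * (K ^ n * Real.exp (-((n:ℝ) * δ)))
        ≤ c * (∑ w ∈ univ.filter (fun w : Fin n → Z => |∑ i, ℓ (w i)| ≤ n * δ), ∏ i, p (w i))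
            * (K ^ n * Real.exp (-((n:ℝ) * δ))) := by
          apply mul_le_mul_of_nonneg_right
            (mul_le_mul_of_nonneg_left (hcheb δ hδ n hn) hc.le) hXpos.le
      _ = ∑ w ∈ univ.filter (fun w : Fin n → Z => |∑ i, ℓ (w i)| ≤ n * δ),
            c * (K ^ n * Real.exp (-((n:ℝ) * δ))) * ∏ i, p (w i) := by
          rw [mul_right_comm, Finset.mul_sum]
      _ ≤ ∑ w ∈ univ.filter (fun w : Fin n → Z => |∑ i, ℓ (w i)| ≤ n * δ),
            min (π₀ * ∏ i, q₀ (w i)) ((1 - π₀) * ∏ i, q₁ (w i)) :=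
          Finset.sum_le_sum point
      _ ≤ ∑ w : Fin n → Z, min (π₀ * ∏ i, q₀ (w i)) ((1 - π₀) * ∏ i, q₁ (w i)) :=
          Finset.sum_le_sum_of_subset_of_nonneg (Finset.filter_subset _ _)
            (fun w _ _ => le_of_lt (lt_min
              (mul_pos hπ₀.1 (Finset.prod_pos fun i _ => h0 _))
              (mul_pos hπ1 (Finset.prod_pos fun i _ => h1 _))))
  -- identify C
  have hCL : C = -Real.log K := by
    rw [hC]
    apply IsGreatest.csSup_eq
    constructor
    · exact ⟨αs, hαIcc, by rw [hρ_rpow]⟩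
    · rintro x ⟨α, hα, rfl⟩
      rw [hρ_rpow]
      exact neg_le_neg (Real.log_le_log hK (hminle α hα))
  rw [hCL]
  refine tendsto_order.2 ⟨?_, ?_⟩
  · intro a ha
    filter_upwards [eventually_ge_atTop 1] with n hn
    have hnR : (0:ℝ) < n := by exact_mod_cast hn
    have h1 : Real.log (Pe n) ≤ (n:ℝ) * Real.log K := by
      have := Real.log_le_log (hPepos n hn) (hupper n hn)
      rwa [Real.log_pow] at this
    have h2 : (1/(n:ℝ)) * Real.log (Pe n) ≤ (1/(n:ℝ)) * ((n:ℝ) * Real.log K) := by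
      apply mul_le_mul_of_nonneg_left h1 (by positivity)
    have h3 : (1/(n:ℝ)) * ((n:ℝ) * Real.log K) = Real.log K := by field_simp
    rw [h3] at h2
    have : -Real.log K ≤ -(1/(n:ℝ)) * Real.log (Pe n) := by
      rw [neg_mul]; linarith
    linarith
  · intro b hb
    set δ : ℝ := (b - (-Real.log K))/3 with hδdef
    have hδ : 0 < δ := by rw [hδdef]; linarith
    have ev1 : ∀ᶠ n : ℕ in atTop, V / (n * δ ^ 2) ≤ 1/2 := by
      have h := (tendsto_const_div_atTop_nhds_zero_nat (V/δ^2)).eventually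
        (eventually_le_nhds (by norm_num : (0:ℝ) < 1/2))
      filter_upwards [h] with n h1
      have : V / ((n:ℝ) * δ ^ 2) = (V/δ^2)/(n:ℝ) := by
        rw [div_div]; ring_nf
      rw [this]
      exact h1
    have ev2 : ∀ᶠ n : ℕ in atTop, -Real.log (c/2) / n ≤ δ :=
      (tendsto_const_div_atTop_nhds_zero_nat (-Real.log (c/2))).eventually
        (eventually_le_nhds hδ)
    filter_upwards [ev1, ev2, eventually_ge_atTop 1] with n h1 h2 hn
    have hnR : (0:ℝ) < n := by exact_mod_cast hn
    have hPelow : c/2 * (K ^ n * Real.exp (-((n:ℝ) * δ))) ≤ Pe n := by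
      have hmain := hlow δ hδ n hn
      have h3 : c/2 ≤ c * (1 - V / (n * δ ^ 2)) := by nlinarith [hc.le]
      calc c/2 * (K ^ n * Real.exp (-((n:ℝ) * δ)))
          ≤ c * (1 - V / (n * δ ^ 2)) * (K ^ n * Real.exp (-((n:ℝ) * δ))) :=
            mul_le_mul_of_nonneg_right h3 (by positivity)
        _ ≤ Pe n := hmain
    have hlog : Real.log (c/2) + ((n:ℝ) * Real.log K + -((n:ℝ) * δ)) ≤ Real.log (Pe n) := by
      have hpos : (0:ℝ) < c/2 * (K ^ n * Real.exp (-((n:ℝ) * δ))) := by positivity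
      have := Real.log_le_log hpos hPelow
      rwa [Real.log_mul (by positivity) (by positivity),
        Real.log_mul (by positivity) (Real.exp_ne_zero _), Real.log_pow, Real.log_exp] at this
    have hstep : -(1/(n:ℝ)) * Real.log (Pe n) ≤
        -(1/(n:ℝ)) * (Real.log (c/2) + ((n:ℝ) * Real.log K + -((n:ℝ) * δ))) :=
      mul_le_mul_of_nonpos_left hlog (neg_nonpos.mpr (by positivity))
    have hinv : (1/(n:ℝ)) * (n:ℝ) = 1 := by
      field_simp
    have heq : -(1/(n:ℝ)) * (Real.log (c/2) + ((n:ℝ) * Real.log K + -((n:ℝ) * δ)))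
        = -Real.log (c/2)/(n:ℝ) + (-Real.log K + δ) := by
      calc -(1/(n:ℝ)) * (Real.log (c/2) + ((n:ℝ) * Real.log K + -((n:ℝ) * δ)))
          = -(Real.log (c/2) * (1/(n:ℝ)))
            + (-(((1/(n:ℝ)) * (n:ℝ)) * Real.log K) + ((1/(n:ℝ)) * (n:ℝ)) * δ) := by ring
        _ = -Real.log (c/2)/(n:ℝ) + (-Real.log K + δ) := by
            rw [hinv]; ring
    rw [heq] at hstep
    have : -(1/(n:ℝ)) * Real.log (Pe n) ≤ δ + (-Real.log K + δ) := by linarith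
    have hb3 : -Real.log K + 2*δ < b := by rw [hδdef]; linarith
    linarith

/-- Chernoff bound for the best achievable Bayesian error of binary hypothesis testing
between two Markov chains. -/
theorem stmt17 {X : Type*} [Fintype X] [Nonempty X]
    (π : X → ℝ) (hπ : ∀ x, 0 < π x) (hπ1 : ∑ x, π x = 1)
    (P₀ P₁ : X → X → ℝ) (hP₀ : IsTransMat P₀) (hP₁ : IsTransMat P₁)
    (hP₀pos : ∀ x y, 0 < P₀ x y) (hP₁pos : ∀ x y, 0 < P₁ x y)
    (π₀ : ℝ) (hπ₀ : π₀ ∈ Set.Ioo (0 : ℝ) 1)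
    (Pe : ℕ → ℝ)
    (hPe : ∀ n : ℕ, 1 ≤ n → Pe n =
      sInf {r : ℝ | ∃ A : Set (Fin n → X × X),
        r = π₀ * prodProb (fun z => π z.1 * P₀ z.1 z.2) A
          + (1 - π₀) * prodProb (fun z => π z.1 * P₁ z.1 z.2) Aᶜ})
    (C : ℝ)
    (hC : C = sSup {c : ℝ | ∃ α ∈ Set.Icc (0 : ℝ) 1,
      c = - Real.log (∑ x, ∑ y, π x * P₀ x y ^ α * P₁ x y ^ (1 - α))}) :
    Tendsto (fun n : ℕ => -(1 / n : ℝ) * Real.log (Pe n)) atTop (nhds C) := by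
  classical
  set q₀ : X × X → ℝ := fun z => π z.1 * P₀ z.1 z.2 with hq₀
  set q₁ : X × X → ℝ := fun z => π z.1 * P₁ z.1 z.2 with hq₁
  have h0 : ∀ z, 0 < q₀ z := fun z => mul_pos (hπ z.1) (hP₀pos z.1 z.2)
  have h1 : ∀ z, 0 < q₁ z := fun z => mul_pos (hπ z.1) (hP₁pos z.1 z.2)
  have s0 : ∑ z, q₀ z = 1 := by
    rw [Fintype.sum_prod_type]
    calc ∑ x, ∑ y, π x * P₀ x y = ∑ x, π x * ∑ y, P₀ x y :=
          Finset.sum_congr rfl fun x _ => (Finset.mul_sum _ _ _).symm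
      _ = 1 := by
          rw [Finset.sum_congr rfl fun x _ => by rw [hP₀.2 x, mul_one]]
          exact hπ1
  have s1 : ∑ z, q₁ z = 1 := by
    rw [Fintype.sum_prod_type]
    calc ∑ x, ∑ y, π x * P₁ x y = ∑ x, π x * ∑ y, P₁ x y :=
          Finset.sum_congr rfl fun x _ => (Finset.mul_sum _ _ _).symm
      _ = 1 := by
          rw [Finset.sum_congr rfl fun x _ => by rw [hP₁.2 x, mul_one]]
          exact hπ1
  have hPe' : ∀ n : ℕ, 1 ≤ n → Pe n = ∑ w : Fin n → X × X,
      min (π₀ * ∏ i, q₀ (w i)) ((1 - π₀) * ∏ i, q₁ (w i)) := by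
    intro n hn
    rw [hPe n hn]
    set m := ∑ w : Fin n → X × X,
      min (π₀ * ∏ i, q₀ (w i)) ((1 - π₀) * ∏ i, q₁ (w i)) with hm
    have hval : ∀ A : Set (Fin n → X × X),
        π₀ * prodProb q₀ A + (1 - π₀) * prodProb q₁ Aᶜ
        = ∑ w : Fin n → X × X,
            (if w ∈ A then π₀ * ∏ i, q₀ (w i) else (1 - π₀) * ∏ i, q₁ (w i)) := by
      intro A
      rw [prodProb, prodProb, Finset.mul_sum, Finset.mul_sum, ← Finset.sum_add_distrib]
      refine Finset.sum_congr rfl fun w _ => ?_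
      by_cases hw : w ∈ A
      · simp [hw]
      · simp [hw]
    have hlb : ∀ r ∈ {r : ℝ | ∃ A : Set (Fin n → X × X),
        r = π₀ * prodProb q₀ A + (1 - π₀) * prodProb q₁ Aᶜ}, m ≤ r := by
      rintro r ⟨A, rfl⟩
      rw [hval A, hm]
      apply Finset.sum_le_sum
      intro w _
      by_cases hw : w ∈ A
      · rw [if_pos hw]; exact min_le_left _ _
      · rw [if_neg hw]; exact min_le_right _ _
    have hmem : m ∈ {r : ℝ | ∃ A : Set (Fin n → X × X),
        r = π₀ * prodProb q₀ A + (1 - π₀) * prodProb q₁ Aᶜ} := by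
      refine ⟨{w | π₀ * ∏ i, q₀ (w i) ≤ (1 - π₀) * ∏ i, q₁ (w i)}, ?_⟩
      rw [hval, hm]
      refine Finset.sum_congr rfl fun w _ => ?_
      rw [min_def]
      simp only [Set.mem_setOf_eq]
    exact le_antisymm (csInf_le ⟨m, hlb⟩ hmem) (le_csInf ⟨m, hmem⟩ hlb)
  have hsum : ∀ α : ℝ, (∑ x, ∑ y, π x * P₀ x y ^ α * P₁ x y ^ (1 - α))
      = ∑ z : X × X, q₀ z ^ α * q₁ z ^ (1 - α) := by
    intro α
    rw [Fintype.sum_prod_type]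
    refine Finset.sum_congr rfl fun x _ => Finset.sum_congr rfl fun y _ => ?_
    have hππ : π x ^ α * π x ^ (1 - α) = π x := by
      rw [← Real.rpow_add (hπ x)]
      norm_num
    calc π x * P₀ x y ^ α * P₁ x y ^ (1 - α)
        = (π x ^ α * π x ^ (1 - α)) * P₀ x y ^ α * P₁ x y ^ (1 - α) := by rw [hππ]
      _ = (π x ^ α * P₀ x y ^ α) * (π x ^ (1 - α) * P₁ x y ^ (1 - α)) := by ring
      _ = q₀ (x, y) ^ α * q₁ (x, y) ^ (1 - α) := by
          rw [← Real.mul_rpow (hπ x).le (hP₀pos x y).le,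
            ← Real.mul_rpow (hπ x).le (hP₁pos x y).le]
  have hC' : C = sSup {c : ℝ | ∃ α ∈ Set.Icc (0:ℝ) 1,
      c = - Real.log (∑ z : X × X, q₀ z ^ α * q₁ z ^ (1 - α))} := by
    rw [hC]
    congr 1
    ext cc
    constructor
    · rintro ⟨α, hα, rfl⟩
      exact ⟨α, hα, by rw [hsum α]⟩
    · rintro ⟨α, hα, rfl⟩
      exact ⟨α, hα, by rw [hsum α]⟩
  exact chernoff_core q₀ q₁ h0 h1 s0 s1 π₀ hπ₀ Pe hPe' C hC'
end
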